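/- arXiv:1606.01725 — 5 statements merged into one kernel-verified Lean document; each statement's English description precedes it below -/
import Mathlib

section
/- Let p ≥ 1 and let {V_{mn}, m,n ≥ 1} be a double array of independent mean-0 real-valued random variables such that ∑_{m=1}^∞ ∑_{n=1}^∞ E|S_{mn}|^p/(mn)^{p+1} < ∞, where S_{mn} = ∑_{i=1}^m ∑_{j=1}^n V_{ij}. Then E|S_{mn}/(mn)|^p → 0 as m ∨ n → ∞; that is, for every ε > 0 there exists N such that max(m,n) ≥ N implies E|S_{mn}|^p/(mn)^p < ε. -/
open MeasureTheory ProbabilityTheory Finset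

section AuxLemmas

variable {Ω : Type*} [MeasurableSpace Ω] {μ : Measure Ω}

lemma convexOn_abs_rpow {p : ℝ} (hp : 1 ≤ p) :
    ConvexOn ℝ Set.univ (fun x : ℝ => |x| ^ p) := by
  refine ⟨convex_univ, fun x _ y _ a b ha hb hab => ?_⟩
  simp only [smul_eq_mul]
  have h1 : |a * x + b * y| ^ p ≤ (a * |x| + b * |y|) ^ p := by
    apply Real.rpow_le_rpow (abs_nonneg _) _ (le_trans zero_le_one hp)
    calc |a * x + b * y| ≤ |a * x| + |b * y| := abs_add_le _ _
      _ = a * |x| + b * |y| := by rw [abs_mul, abs_mul, abs_of_nonneg ha, abs_of_nonneg hb]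
  refine h1.trans ?_
  have h2 := (convexOn_rpow hp).2 (Set.mem_Ici.2 (abs_nonneg x)) (Set.mem_Ici.2 (abs_nonneg y))
    ha hb hab
  simpa using h2

lemma continuous_abs_rpow {p : ℝ} (hp : 1 ≤ p) : Continuous (fun x : ℝ => |x| ^ p) :=
  (Real.continuous_rpow_const (le_trans zero_le_one hp)).comp continuous_abs

lemma jensen_step [IsProbabilityMeasure μ] {X Y : Ω → ℝ} (hX : Measurable X) (hY : Measurable Y)
    (hXY : IndepFun X Y μ) {p : ℝ} (hp : 1 ≤ p)
    (hYint : Integrable Y μ) (hYmean : ∫ ω, Y ω ∂μ = 0)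
    (hXp : Integrable (fun ω => |X ω| ^ p) μ)
    (hXYp : Integrable (fun ω => |X ω + Y ω| ^ p) μ) :
    ∫ ω, |X ω| ^ p ∂μ ≤ ∫ ω, |X ω + Y ω| ^ p ∂μ := by
  set ν₁ := μ.map X with hν₁
  set ν₂ := μ.map Y with hν₂
  have i1 : IsProbabilityMeasure ν₁ := Measure.isProbabilityMeasure_map hX.aemeasurable
  have i2 : IsProbabilityMeasure ν₂ := Measure.isProbabilityMeasure_map hY.aemeasurable
  have hmap : μ.map (fun ω => (X ω, Y ω)) = ν₁.prod ν₂ :=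
    (indepFun_iff_map_prod_eq_prod_map_map hX.aemeasurable hY.aemeasurable).mp hXY
  have hgc : Continuous (fun z : ℝ × ℝ => |z.1 + z.2| ^ p) :=
    (continuous_abs_rpow hp).comp (continuous_fst.add continuous_snd)
  have hgint : Integrable (fun z : ℝ × ℝ => |z.1 + z.2| ^ p) (ν₁.prod ν₂) := by
    rw [← hmap, integrable_map_measure hgc.aestronglyMeasurable
      (hX.aemeasurable.prodMk hY.aemeasurable)]
    exact hXYp
  have hid2 : Integrable (fun y : ℝ => y) ν₂ := by
    rw [hν₂]
    show Integrable id (μ.map Y)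
    rw [integrable_map_measure aestronglyMeasurable_id hY.aemeasurable]
    simpa [Function.comp] using hYint
  have hmean2 : ∫ y, y ∂ν₂ = 0 := by
    rw [hν₂]
    show ∫ y, id y ∂(μ.map Y) = 0
    rw [integral_map hY.aemeasurable aestronglyMeasurable_id]
    simpa using hYmean
  have hXp1 : Integrable (fun x : ℝ => |x| ^ p) ν₁ := by
    rw [hν₁, integrable_map_measure (continuous_abs_rpow hp).aestronglyMeasurable
      hX.aemeasurable]
    exact hXp
  have hptwise : ∀ᵐ x ∂ν₁, |x| ^ p ≤ ∫ y, |x + y| ^ p ∂ν₂ := by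
    filter_upwards [hgint.prod_right_ae] with x hx
    have h1 : ∫ y, (x + y) ∂ν₂ = x := by
      rw [integral_add (integrable_const x) hid2, integral_const, hmean2]
      simp
    have hfint : Integrable (fun y : ℝ => x + y) ν₂ := (integrable_const x).add hid2
    have h2 := (convexOn_abs_rpow hp).map_integral_le (continuous_abs_rpow hp).continuousOn
      isClosed_univ (Filter.Eventually.of_forall fun y => Set.mem_univ ((fun y : ℝ => x + y) y))
      hfint (by exact hx)
    rw [h1] at h2
    simpa [Function.comp] using h2
  calc ∫ ω, |X ω| ^ p ∂μ = ∫ x, |x| ^ p ∂ν₁ := by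
        rw [hν₁, integral_map hX.aemeasurable (continuous_abs_rpow hp).aestronglyMeasurable]
    _ ≤ ∫ x, ∫ y, |x + y| ^ p ∂ν₂ ∂ν₁ :=
        integral_mono_ae hXp1 hgint.integral_prod_left hptwise
    _ = ∫ z : ℝ × ℝ, |z.1 + z.2| ^ p ∂(ν₁.prod ν₂) := (integral_prod _ hgint).symm
    _ = ∫ ω, |X ω + Y ω| ^ p ∂μ := by
        rw [← hmap, integral_map (hX.aemeasurable.prodMk hY.aemeasurable)
          hgc.aestronglyMeasurable]


lemma iIndepFun_congr_ae {ι : Type*} {f g : ι → Ω → ℝ}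
    (hf : iIndepFun f μ) (h : ∀ i, f i =ᵐ[μ] g i) :
    iIndepFun g μ := by
  rw [iIndepFun_iff_measure_inter_preimage_eq_mul] at hf ⊢
  intro S sets hsets
  have hS : ∀ᵐ ω ∂μ, ∀ i ∈ S, f i ω = g i ω :=
    (MeasureTheory.ae_ball_iff S.countable_toSet).2 fun i _ => h i
  have h1 : (⋂ i ∈ S, g i ⁻¹' sets i) =ᵐ[μ] (⋂ i ∈ S, f i ⁻¹' sets i) := by
    filter_upwards [hS] with ω hω
    have : (ω ∈ ⋂ i ∈ S, g i ⁻¹' sets i) ↔ (ω ∈ ⋂ i ∈ S, f i ⁻¹' sets i) := by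
      simp only [Set.mem_iInter, Set.mem_preimage]
      exact forall_congr' fun i => forall_congr' fun hi => by rw [hω i hi]
    exact eq_iff_iff.2 this
  rw [measure_congr h1, hf S hsets]
  refine Finset.prod_congr rfl fun i _ => measure_congr ?_
  filter_upwards [h i] with ω hω
  exact eq_iff_iff.2 (by change f i ω ∈ sets i ↔ g i ω ∈ sets i; rw [hω])

lemma sum_mono_lemma [IsProbabilityMeasure μ] {ι : Type*} {W : ι → Ω → ℝ}
    (hmeas : ∀ q, Measurable (W q))
    (hind : iIndepFun W μ)
    (hWint : ∀ q, Integrable (W q) μ)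
    (hWmean : ∀ q, ∫ ω, W q ω ∂μ = 0)
    {p : ℝ} (hp : 1 ≤ p)
    (hWmom : ∀ q, MemLp (W q) (ENNReal.ofReal p) μ)
    {P Q : Finset ι} (hPQ : P ⊆ Q) :
    ∫ ω, |∑ q ∈ P, W q ω| ^ p ∂μ ≤ ∫ ω, |∑ q ∈ Q, W q ω| ^ p ∂μ := by
  classical
  have hp0 : (0:ℝ) ≤ p := le_trans zero_le_one hp
  have hne : ENNReal.ofReal p ≠ 0 := by
    simp only [ne_eq, ENNReal.ofReal_eq_zero, not_le]; linarith
  have hnetop : ENNReal.ofReal p ≠ ⊤ := ENNReal.ofReal_ne_top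
  have htoReal : (ENNReal.ofReal p).toReal = p := ENNReal.toReal_ofReal hp0
  have hXm : Measurable (fun ω => ∑ q ∈ P, W q ω) :=
    Finset.measurable_sum P fun q _ => hmeas q
  have hYm : Measurable (fun ω => ∑ q ∈ Q \ P, W q ω) :=
    Finset.measurable_sum _ fun q _ => hmeas q
  have hXYsum : ∀ ω, (∑ q ∈ P, W q ω) + (∑ q ∈ Q \ P, W q ω) = ∑ q ∈ Q, W q ω := by
    intro ω; rw [add_comm]; exact Finset.sum_sdiff hPQ
  -- independence of the two partial sums
  have hindXY : IndepFun (fun ω => ∑ q ∈ P, W q ω) (fun ω => ∑ q ∈ Q \ P, W q ω) μ := by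
    have h := hind.indepFun_finset P (Q \ P) Finset.disjoint_sdiff hmeas
    have hm1 : Measurable (fun v : P → ℝ => ∑ i, v i) :=
      Finset.measurable_sum Finset.univ fun i _ => measurable_pi_apply i
    have hm2 : Measurable (fun v : (Q \ P : Finset ι) → ℝ => ∑ i, v i) :=
      Finset.measurable_sum Finset.univ fun i _ => measurable_pi_apply i
    have h2 := h.comp hm1 hm2
    have e1 : ((fun v : P → ℝ => ∑ i, v i) ∘ fun a (i : P) => W i a) =
        fun ω => ∑ q ∈ P, W q ω := by
      funext ω; simp only [Function.comp]; exact Finset.sum_coe_sort P (fun q => W q ω)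
    have e2 : ((fun v : (Q \ P : Finset ι) → ℝ => ∑ i, v i) ∘
        fun a (i : (Q \ P : Finset ι)) => W i a) = fun ω => ∑ q ∈ Q \ P, W q ω := by
      funext ω; simp only [Function.comp]; exact Finset.sum_coe_sort _ (fun q => W q ω)
    rwa [e1, e2] at h2
  have hYint : Integrable (fun ω => ∑ q ∈ Q \ P, W q ω) μ :=
    integrable_finset_sum _ fun q _ => hWint q
  have hYmean : ∫ ω, ∑ q ∈ Q \ P, W q ω ∂μ = 0 := by
    rw [integral_finset_sum _ fun q _ => hWint q]
    exact Finset.sum_eq_zero fun q _ => hWmean q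
  have hXp : Integrable (fun ω => |∑ q ∈ P, W q ω| ^ p) μ := by
    have := (memLp_finset_sum' P fun q _ => hWmom q).integrable_norm_rpow hne hnetop
    simpa [htoReal, Real.norm_eq_abs] using this
  have hQp : Integrable (fun ω => |∑ q ∈ Q, W q ω| ^ p) μ := by
    have := (memLp_finset_sum' Q fun q _ => hWmom q).integrable_norm_rpow hne hnetop
    simpa [htoReal, Real.norm_eq_abs] using this
  have hXYp : Integrable (fun ω => |(∑ q ∈ P, W q ω) + (∑ q ∈ Q \ P, W q ω)| ^ p) μ := by
    simp only [hXYsum]; exact hQp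
  have h := jensen_step hXm hYm hindXY hp hYint hYmean hXp hXYp
  simpa only [hXYsum] using h

end AuxLemmas

theorem stmt4
    {Ω : Type*} [MeasurableSpace Ω] (μ : Measure Ω) [IsProbabilityMeasure μ]
    (V : ℕ → ℕ → Ω → ℝ) (p : ℝ) (hp : 1 ≤ p)
    (hindep : iIndepFun (fun q : ℕ × ℕ => V q.1 q.2) μ)
    (hint : ∀ m n, Integrable (V m n) μ)
    (hmean : ∀ m n, ∫ ω, V m n ω ∂μ = 0)
    (hmom : ∀ m n : ℕ, Integrable (fun ω => |V m n ω| ^ p) μ)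
    (hsum : Summable (fun q : ℕ × ℕ =>
      (∫ ω, |∑ i ∈ Finset.Icc 1 (q.1 + 1), ∑ j ∈ Finset.Icc 1 (q.2 + 1), V i j ω| ^ p ∂μ) /
        (((q.1 + 1 : ℕ) : ℝ) * ((q.2 + 1 : ℕ) : ℝ)) ^ (p + 1))) :
    ∀ ε > (0 : ℝ), ∃ N : ℕ, ∀ m n : ℕ, 1 ≤ m → 1 ≤ n → N ≤ max m n →
      (∫ ω, |∑ i ∈ Finset.Icc 1 m, ∑ j ∈ Finset.Icc 1 n, V i j ω| ^ p ∂μ) /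
        ((m : ℝ) * (n : ℝ)) ^ p < ε := by
  classical
  have hp0 : (0:ℝ) ≤ p := le_trans zero_le_one hp
  have hne : ENNReal.ofReal p ≠ 0 := by
    simp only [ne_eq, ENNReal.ofReal_eq_zero, not_le]; linarith
  have hnetop : ENNReal.ofReal p ≠ ⊤ := ENNReal.ofReal_ne_top
  have htoReal : (ENNReal.ofReal p).toReal = p := ENNReal.toReal_ofReal hp0
  -- measurable modification of V
  set W : ℕ × ℕ → Ω → ℝ := fun q => (hint q.1 q.2).1.mk (V q.1 q.2) with hWdef
  have hWmeas : ∀ q, Measurable (W q) :=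
    fun q => (hint q.1 q.2).1.stronglyMeasurable_mk.measurable
  have hWae : ∀ q : ℕ × ℕ, V q.1 q.2 =ᵐ[μ] W q := fun q => (hint q.1 q.2).1.ae_eq_mk
  have hindW : iIndepFun W μ := iIndepFun_congr_ae hindep hWae
  have hWint : ∀ q, Integrable (W q) μ := fun q => (hint q.1 q.2).congr (hWae q)
  have hWmean : ∀ q, ∫ ω, W q ω ∂μ = 0 := fun q => by
    rw [← integral_congr_ae (hWae q)]; exact hmean q.1 q.2
  have hWmom : ∀ q, MemLp (W q) (ENNReal.ofReal p) μ := by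
    intro q
    have h1 : MemLp (V q.1 q.2) (ENNReal.ofReal p) μ := by
      rw [← memLp_norm_rpow_iff (hint q.1 q.2).1 hne hnetop,
        ENNReal.div_self hne hnetop, memLp_one_iff_integrable]
      simpa [htoReal, Real.norm_eq_abs] using hmom q.1 q.2
    exact h1.ae_eq (hWae q)
  -- the key quantity
  set a : ℕ → ℕ → ℝ := fun m n => ∫ ω, |∑ q ∈ Icc 1 m ×ˢ Icc 1 n, W q ω| ^ p ∂μ with hadef
  have hkey : ∀ m n : ℕ,
      (∫ ω, |∑ i ∈ Finset.Icc 1 m, ∑ j ∈ Finset.Icc 1 n, V i j ω| ^ p ∂μ) = a m n := by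
    intro m n
    refine integral_congr_ae ?_
    have h1 : ∀ᵐ ω ∂μ, ∀ q ∈ Icc 1 m ×ˢ Icc 1 n, V q.1 q.2 ω = W q ω :=
      (MeasureTheory.ae_ball_iff (Icc 1 m ×ˢ Icc 1 n).countable_toSet).2 fun q _ => hWae q
    filter_upwards [h1] with ω hω
    have e : (∑ i ∈ Finset.Icc 1 m, ∑ j ∈ Finset.Icc 1 n, V i j ω)
        = ∑ q ∈ Icc 1 m ×ˢ Icc 1 n, V q.1 q.2 ω :=
      (Finset.sum_product' (Icc 1 m) (Icc 1 n) (fun i j => V i j ω)).symm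
    have e2 : (∑ q ∈ Icc 1 m ×ˢ Icc 1 n, V q.1 q.2 ω) = ∑ q ∈ Icc 1 m ×ˢ Icc 1 n, W q ω :=
      Finset.sum_congr rfl fun q hq => hω q hq
    rw [e, e2]
  have hanonneg : ∀ m n, 0 ≤ a m n :=
    fun m n => integral_nonneg fun ω => Real.rpow_nonneg (abs_nonneg _) p
  have hmono : ∀ m n k l : ℕ, m ≤ k → n ≤ l → a m n ≤ a k l := by
    intro m n k l hmk hnl
    exact sum_mono_lemma hWmeas hindW hWint hWmean hp hWmom
      (Finset.product_subset_product (Finset.Icc_subset_Icc le_rfl hmk)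
        (Finset.Icc_subset_Icc le_rfl hnl))
  set f : ℕ × ℕ → ℝ := fun q => a (q.1 + 1) (q.2 + 1) /
      (((q.1 + 1 : ℕ) : ℝ) * ((q.2 + 1 : ℕ) : ℝ)) ^ (p + 1) with hfdef
  have hfsum : Summable f := by
    refine (summable_congr ?_).1 hsum
    intro q
    simp only [hfdef]
    rw [hkey]
  have hfnonneg : ∀ q, 0 ≤ f q := by
    intro q
    simp only [hfdef]
    exact div_nonneg (hanonneg _ _) (Real.rpow_nonneg (by positivity) _)
  set C : ℝ := (4:ℝ) ^ (p+1) with hCdef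
  have hCpos : 0 < C := Real.rpow_pos_of_pos (by norm_num) _
  intro ε hε
  obtain ⟨F, hF⟩ : ∃ F : Finset (ℕ × ℕ), (∑' x : {x : ℕ × ℕ // x ∉ F}, f x) < ε / (2 * C) := by
    have h := tendsto_tsum_compl_atTop_zero f
    have hpos : 0 < ε / (2 * C) := by positivity
    exact (h.eventually (gt_mem_nhds hpos)).exists
  refine ⟨F.sup (fun q : ℕ × ℕ => max q.1 q.2) + 2, fun m n hm hn hmn => ?_⟩
  rw [hkey m n]
  have hmpos : (0:ℝ) < (m:ℝ) := by exact_mod_cast hm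
  have hnpos : (0:ℝ) < (n:ℝ) := by exact_mod_cast hn
  set t : ℝ := (m : ℝ) * (n : ℝ) with htdef
  have htpos : (0:ℝ) < t := mul_pos hmpos hnpos
  set G : Finset (ℕ × ℕ) := Icc (m-1) (2*m-2) ×ˢ Icc (n-1) (2*n-2) with hGdef
  have hGcard : (G.card : ℝ) = t := by
    rw [hGdef, Finset.card_product, Nat.card_Icc, Nat.card_Icc]
    have e1 : 2*m-2+1-(m-1) = m := by omega
    have e2 : 2*n-2+1-(n-1) = n := by omega
    rw [e1, e2, htdef]
    push_cast
    ring
  have hGF : ∀ q ∈ G, q ∉ F := by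
    intro q hq hqF
    have h1 : max q.1 q.2 ≤ F.sup (fun q : ℕ × ℕ => max q.1 q.2) :=
      Finset.le_sup (f := fun q : ℕ × ℕ => max q.1 q.2) hqF
    rw [hGdef, Finset.mem_product, Finset.mem_Icc, Finset.mem_Icc] at hq
    omega
  have hstep : ∀ q ∈ G, a m n / (4 * t) ^ (p+1) ≤ f q := by
    intro q hq
    rw [hGdef, Finset.mem_product, Finset.mem_Icc, Finset.mem_Icc] at hq
    have hk1 : m ≤ q.1 + 1 := by omega
    have hk2 : q.1 + 1 ≤ 2 * m := by omega
    have hl1 : n ≤ q.2 + 1 := by omega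
    have hl2 : q.2 + 1 ≤ 2 * n := by omega
    simp only [hfdef]
    have c1 : ((q.1 + 1 : ℕ) : ℝ) ≤ 2 * (m:ℝ) := by exact_mod_cast hk2
    have c2 : ((q.2 + 1 : ℕ) : ℝ) ≤ 2 * (n:ℝ) := by exact_mod_cast hl2
    refine div_le_div₀ (hanonneg _ _) (hmono m n _ _ hk1 hl1)
      (Real.rpow_pos_of_pos (by positivity) _)
      (Real.rpow_le_rpow (by positivity) ?_ (by linarith))
    calc ((q.1 + 1 : ℕ) : ℝ) * ((q.2 + 1 : ℕ) : ℝ) ≤ (2 * (m:ℝ)) * (2 * (n:ℝ)) :=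
          mul_le_mul c1 c2 (by positivity) (by positivity)
      _ = 4 * t := by rw [htdef]; ring
  have hsum_lb : (G.card : ℝ) * (a m n / (4*t) ^ (p+1)) ≤ ∑ q ∈ G, f q := by
    have h := Finset.card_nsmul_le_sum G f _ hstep
    simpa [nsmul_eq_mul] using h
  have h4t : (4*t) ^ (p+1) = C * (t ^ p * t) := by
    rw [Real.mul_rpow (by norm_num) (le_of_lt htpos), hCdef, Real.rpow_add_one (ne_of_gt htpos)]
  have key : a m n / t ^ p ≤ C * ∑ q ∈ G, f q := by
    have htp : (0:ℝ) < t ^ p := Real.rpow_pos_of_pos htpos p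
    rw [hGcard, h4t] at hsum_lb
    have e : t * (a m n / (C * (t ^ p * t))) = a m n / (C * t ^ p) := by
      field_simp
    rw [e] at hsum_lb
    calc a m n / t ^ p = C * (a m n / (C * t ^ p)) := by
          field_simp
      _ ≤ C * ∑ q ∈ G, f q := mul_le_mul_of_nonneg_left hsum_lb (le_of_lt hCpos)
  have hsub : ∑ q ∈ G, f q ≤ ∑' x : {x : ℕ × ℕ // x ∉ F}, f x := by
    rw [← Finset.tsum_subtype G f]
    exact Summable.tsum_le_tsum_of_inj
      (fun x : {x // x ∈ G} => (⟨x.1, hGF x.1 x.2⟩ : {x : ℕ × ℕ // x ∉ F}))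
      (fun x y hxy => Subtype.ext (by simpa using congrArg Subtype.val hxy))
      (fun c _ => hfnonneg c)
      (fun x => le_rfl)
      (Summable.of_finite)
      (hfsum.subtype _)
  calc a m n / t ^ p ≤ C * ∑ q ∈ G, f q := key
    _ ≤ C * ∑' x : {x : ℕ × ℕ // x ∉ F}, f x := mul_le_mul_of_nonneg_left hsub (le_of_lt hCpos)
    _ < C * (ε / (2 * C)) := mul_lt_mul_of_pos_left hF hCpos
    _ = ε / 2 := by field_simp
    _ < ε := by linarith
end

section
/- Let {V_{mn}} be a double array of independent symmetric random variables in a real separable Banach space (or in ℝ) and suppose S_{mn}/(mn) → 0 almost surely as m ∨ n → ∞, where S_{mn} = ∑_{i=1}^m ∑_{j=1}^n V_{ij}. Then for every ε > 0, ∑_{m=1}^∞ ∑_{n=1}^∞ (1/(mn)) P(‖∑_{i=m+1}^{2m} ∑_{j=n+1}^{2n} V_{ij}‖ > ε m n) < ∞. -/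
open MeasureTheory ProbabilityTheory Finset

open Filter ENNReal

set_option linter.unusedSectionVars false
set_option linter.unusedVariables false
set_option maxHeartbeats 1000000

namespace Stmt5Aux

variable {Ω : Type*} [MeasurableSpace Ω] {μ : Measure Ω} [IsProbabilityMeasure μ]
    {E : Type*} [NormedAddCommGroup E] [MeasurableSpace E] [BorelSpace E]
    [SecondCountableTopology E]
    (V : ℕ → ℕ → Ω → E)

/-- rectangular block sum over `(a,b] × (c,d]`. -/
def bsum (a b c d : ℕ) (ω : Ω) : E := ∑ i ∈ Finset.Ioc a b, ∑ j ∈ Finset.Ioc c d, V i j ω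

lemma bsum_eq {a b c d : ℕ} (hab : a ≤ b) (hcd : c ≤ d) (ω : Ω) :
    bsum V a b c d ω =
      bsum V 0 b 0 d ω - bsum V 0 a 0 d ω - (bsum V 0 b 0 c ω - bsum V 0 a 0 c ω) := by
  have i1 : ∀ x y : ℕ, bsum V x y 0 c ω + bsum V x y c d ω = bsum V x y 0 d ω := by
    intro x y
    unfold bsum
    rw [← Finset.sum_add_distrib]
    exact Finset.sum_congr rfl fun i _ => Finset.sum_Ioc_consecutive _ (Nat.zero_le c) hcd
  have o1 : ∀ x y : ℕ, bsum V 0 a x y ω + bsum V a b x y ω = bsum V 0 b x y ω := by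
    intro x y
    exact Finset.sum_Ioc_consecutive _ (Nat.zero_le a) hab
  have e1 : bsum V a b 0 d ω = bsum V 0 b 0 d ω - bsum V 0 a 0 d ω :=
    eq_sub_of_add_eq' (o1 0 d)
  have e2 : bsum V a b 0 c ω = bsum V 0 b 0 c ω - bsum V 0 a 0 c ω :=
    eq_sub_of_add_eq' (o1 0 c)
  have e3 : bsum V a b c d ω = bsum V a b 0 d ω - bsum V a b 0 c ω :=
    (eq_sub_of_add_eq' (i1 a b)).symm ▸ rfl
  rw [e3, e1, e2]

lemma norm_bsum_le {a b c d : ℕ} (hab : a ≤ b) (hcd : c ≤ d) (ω : Ω) :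
    ‖bsum V a b c d ω‖ ≤ ‖bsum V 0 b 0 d ω‖ + ‖bsum V 0 a 0 d ω‖
      + ‖bsum V 0 b 0 c ω‖ + ‖bsum V 0 a 0 c ω‖ := by
  rw [bsum_eq V hab hcd]
  calc ‖bsum V 0 b 0 d ω - bsum V 0 a 0 d ω - (bsum V 0 b 0 c ω - bsum V 0 a 0 c ω)‖
      ≤ ‖bsum V 0 b 0 d ω - bsum V 0 a 0 d ω‖ + ‖bsum V 0 b 0 c ω - bsum V 0 a 0 c ω‖ :=
        norm_sub_le _ _
    _ ≤ (‖bsum V 0 b 0 d ω‖ + ‖bsum V 0 a 0 d ω‖) + (‖bsum V 0 b 0 c ω‖ + ‖bsum V 0 a 0 c ω‖) :=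
        add_le_add (norm_sub_le _ _) (norm_sub_le _ _)
    _ = _ := by ring

lemma measurable_bsum (hmeas : ∀ m n, Measurable (V m n)) (a b c d : ℕ) :
    Measurable (bsum V a b c d) := by
  unfold bsum
  exact Finset.measurable_sum _ fun i _ => Finset.measurable_sum _ fun j _ => hmeas i j

variable {V}

lemma indep_finset_sums
    (hindep : iIndepFun (fun q : ℕ × ℕ => V q.1 q.2) μ)
    (hmeas : ∀ m n, Measurable (V m n)) (S T : Finset (ℕ × ℕ)) (hST : Disjoint S T) :
    IndepFun (fun ω => ∑ p ∈ S, V p.1 p.2 ω) (fun ω => ∑ p ∈ T, V p.1 p.2 ω) μ := by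
  have h := hindep.indepFun_finset S T hST (fun q => hmeas q.1 q.2)
  have h2 := h.comp (φ := fun v : { x // x ∈ S } → E => ∑ i ∈ S.attach, v i)
    (ψ := fun v : { x // x ∈ T } → E => ∑ i ∈ T.attach, v i)
    (Finset.measurable_sum _ fun i _ => measurable_pi_apply i)
    (Finset.measurable_sum _ fun i _ => measurable_pi_apply i)
  have e1 : ((fun v : { x // x ∈ S } → E => ∑ i ∈ S.attach, v i) ∘
      (fun ω (i : { x // x ∈ S }) => V (i : ℕ × ℕ).1 (i : ℕ × ℕ).2 ω))
      = fun ω => ∑ p ∈ S, V p.1 p.2 ω := by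
    funext ω
    exact Finset.sum_attach S fun p => V p.1 p.2 ω
  have e2 : ((fun v : { x // x ∈ T } → E => ∑ i ∈ T.attach, v i) ∘
      (fun ω (i : { x // x ∈ T }) => V (i : ℕ × ℕ).1 (i : ℕ × ℕ).2 ω))
      = fun ω => ∑ p ∈ T, V p.1 p.2 ω := by
    funext ω
    exact Finset.sum_attach T fun p => V p.1 p.2 ω
  rwa [e1, e2] at h2

lemma blocks_meas_biInter
    (hindep : iIndepFun (fun q : ℕ × ℕ => V q.1 q.2) μ)
    (hmeas : ∀ m n, Measurable (V m n))
    {B : ℕ → Finset (ℕ × ℕ)} (hB : ∀ r r', r ≠ r' → Disjoint (B r) (B r'))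
    {C : ℕ → Set E} (hC : ∀ r, MeasurableSet (C r)) (J : Finset ℕ) :
    μ (⋂ r ∈ J, (fun ω => ∑ p ∈ B r, V p.1 p.2 ω) ⁻¹' C r)
      = ∏ r ∈ J, μ ((fun ω => ∑ p ∈ B r, V p.1 p.2 ω) ⁻¹' C r) := by
  classical
  induction J using Finset.induction_on with
  | empty => simp
  | insert r J' hr IH =>
    set T : Finset (ℕ × ℕ) := J'.biUnion B with hT
    have hdisj : Disjoint (B r) T :=
      Finset.disjoint_biUnion_right _ _ _ |>.2 fun r' hr' =>
        hB r r' (fun h => hr (h ▸ hr'))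
    have h := hindep.indepFun_finset (B r) T hdisj (fun q => hmeas q.1 q.2)
    have h2 := h.comp (φ := fun v : { x // x ∈ B r } → E => ∑ i ∈ (B r).attach, v i)
      (ψ := fun v : { x // x ∈ T } → E =>
        (fun r' : ℕ => ∑ p ∈ (B r' ∩ T).attach, v ⟨(p : ℕ × ℕ), (Finset.mem_inter.1 p.2).2⟩))
      (Finset.measurable_sum _ fun i _ => measurable_pi_apply i)
      (measurable_pi_lambda _ fun r' => Finset.measurable_sum _ fun p _ => measurable_pi_apply _)
    set X : Ω → E := fun ω => ∑ p ∈ B r, V p.1 p.2 ω with hX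
    set G : Ω → ℕ → E := fun ω r' => ∑ p ∈ (B r' ∩ T), V p.1 p.2 ω with hG
    have e1 : ((fun v : { x // x ∈ B r } → E => ∑ i ∈ (B r).attach, v i) ∘
        (fun ω (i : { x // x ∈ B r }) => V (i : ℕ × ℕ).1 (i : ℕ × ℕ).2 ω)) = X := by
      funext ω; exact Finset.sum_attach (B r) fun p => V p.1 p.2 ω
    have e2 : ((fun v : { x // x ∈ T } → E =>
        (fun r' : ℕ => ∑ p ∈ (B r' ∩ T).attach, v ⟨(p : ℕ × ℕ), (Finset.mem_inter.1 p.2).2⟩)) ∘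
        (fun ω (i : { x // x ∈ T }) => V (i : ℕ × ℕ).1 (i : ℕ × ℕ).2 ω)) = G := by
      funext ω
      funext r'
      exact Finset.sum_attach (B r' ∩ T) fun p => V p.1 p.2 ω
    rw [e1, e2] at h2
    set D : Set (ℕ → E) := ⋂ r' ∈ J', (fun u : ℕ → E => u r') ⁻¹' C r' with hD
    have hDmeas : MeasurableSet D :=
      MeasurableSet.biInter (Finset.countable_toSet J') fun r' _ =>
        (measurable_pi_apply r') (hC r')
    have key := h2.measure_inter_preimage_eq_mul (C r) D (hC r) hDmeas
    have hGD : G ⁻¹' D = ⋂ r' ∈ J', (fun ω => ∑ p ∈ B r', V p.1 p.2 ω) ⁻¹' C r' := by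
      rw [hD]
      ext ω
      simp only [Set.preimage_iInter, Set.mem_iInter, Set.mem_preimage]
      refine forall_congr' fun r' => forall_congr' fun hr' => ?_
      have : B r' ∩ T = B r' := Finset.inter_eq_left.2 (Finset.subset_biUnion_of_mem B hr')
      rw [hG]
      simp only [this]
    rw [hGD] at key
    rw [Finset.set_biInter_insert, Finset.prod_insert hr, key, IH]

lemma tsum_log_le (c : ℕ → ℝ≥0∞) :
    ∑' i : ℕ, (((i + 1 : ℕ) : ℝ≥0∞))⁻¹ * c (Nat.log 2 (i + 1)) ≤ ∑' l, c l := by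
  classical
  set f : ℕ → ℕ × ℕ := fun i => (Nat.log 2 (i + 1), i + 1 - 2 ^ Nat.log 2 (i + 1)) with hf
  have hpow : ∀ i : ℕ, 2 ^ Nat.log 2 (i + 1) ≤ i + 1 :=
    fun i => Nat.pow_log_le_self 2 (Nat.succ_ne_zero i)
  have hlt : ∀ i : ℕ, i + 1 < 2 ^ (Nat.log 2 (i + 1) + 1) :=
    fun i => Nat.lt_pow_succ_log_self (by norm_num) _
  have hinj : Function.Injective f := by
    intro i j hij
    have h1 : Nat.log 2 (i + 1) = Nat.log 2 (j + 1) := congrArg Prod.fst hij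
    have h2 : i + 1 - 2 ^ Nat.log 2 (i + 1) = j + 1 - 2 ^ Nat.log 2 (j + 1) :=
      congrArg Prod.snd hij
    have hi := hpow i
    have hj := hpow j
    rw [h1] at h2 hi
    omega
  set g : ℕ × ℕ → ℝ≥0∞ :=
    fun p => if p.2 < 2 ^ p.1 then ((2 : ℝ≥0∞) ^ p.1)⁻¹ * c p.1 else 0 with hg
  have hcast : ∀ k : ℕ, ((2 : ℝ≥0∞) ^ k) = ((2 ^ k : ℕ) : ℝ≥0∞) := by
    intro k; push_cast; ring
  have hpt : ∀ i : ℕ, (((i + 1 : ℕ) : ℝ≥0∞))⁻¹ * c (Nat.log 2 (i + 1)) ≤ g (f i) := by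
    intro i
    have hcond : (f i).2 < 2 ^ (f i).1 := by
      simp only [hf]
      have := hlt i
      have := hpow i
      have h2 : 2 ^ (Nat.log 2 (i + 1) + 1) = 2 ^ Nat.log 2 (i + 1) * 2 := pow_succ 2 _
      omega
    rw [hg]
    simp only [hcond, if_pos]
    refine mul_le_mul_left ?_ _
    rw [ENNReal.inv_le_inv, hcast]
    exact_mod_cast hpow i
  calc ∑' i : ℕ, (((i + 1 : ℕ) : ℝ≥0∞))⁻¹ * c (Nat.log 2 (i + 1))
      ≤ ∑' i : ℕ, g (f i) := ENNReal.tsum_le_tsum hpt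
    _ ≤ ∑' p : ℕ × ℕ, g p := ENNReal.tsum_comp_le_tsum_of_injective hinj g
    _ = ∑' l : ℕ, ∑' r : ℕ, g (l, r) := ENNReal.tsum_prod (f := fun l r => g (l, r))
    _ = ∑' l : ℕ, c l := by
        refine tsum_congr fun l => ?_
        have : ∑' r : ℕ, g (l, r) = ∑ r ∈ Finset.range (2 ^ l), ((2 : ℝ≥0∞) ^ l)⁻¹ * c l := by
          rw [tsum_eq_sum (s := Finset.range (2 ^ l)) ?_]
          · exact Finset.sum_congr rfl fun r hr => by
              simp only [hg]; rw [if_pos (Finset.mem_range.1 hr)]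
          · intro b hb
            simp only [hg]
            rw [if_neg (by simpa using hb)]
        rw [this, Finset.sum_const, Finset.card_range, nsmul_eq_mul, ← mul_assoc, ← hcast,
          ENNReal.mul_inv_cancel (by positivity) (by simp), one_mul]

lemma tsum_even_odd (g : ℕ → ℝ≥0∞) :
    ∑' k : ℕ, g k = (∑' i : ℕ, g (2 * i)) + ∑' i : ℕ, g (2 * i + 1) := by
  have h := ((Nat.divModEquiv 2).symm.tsum_eq g).symm
  rw [h, ENNReal.tsum_prod (f := fun i (a : Fin 2) => g ((Nat.divModEquiv 2).symm (i, a)))]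
  have : ∀ i : ℕ, (∑' a : Fin 2, g ((Nat.divModEquiv 2).symm (i, a)))
      = g (2 * i) + g (2 * i + 1) := by
    intro i
    rw [tsum_fintype, Fin.sum_univ_two]
    simp [Nat.divModEquiv, mul_comm]
  rw [tsum_congr this, ENNReal.tsum_add]

end Stmt5Aux

open Stmt5Aux in
theorem stmt5
    {Ω : Type*} [MeasurableSpace Ω] (μ : Measure Ω) [IsProbabilityMeasure μ]
    {E : Type*} [NormedAddCommGroup E] [MeasurableSpace E] [BorelSpace E]
    [SecondCountableTopology E]
    (V : ℕ → ℕ → Ω → E) (hmeas : ∀ m n, Measurable (V m n))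
    (hindep : iIndepFun (fun q : ℕ × ℕ => V q.1 q.2) μ)
    (hsym : ∀ m n, Measure.map (V m n) μ = Measure.map (fun ω => -V m n ω) μ)
    (hslln : ∀ᵐ ω ∂μ, ∀ ε > (0 : ℝ), ∃ N : ℕ, ∀ m n : ℕ, 1 ≤ m → 1 ≤ n → N ≤ max m n →
      ‖∑ i ∈ Finset.Icc 1 m, ∑ j ∈ Finset.Icc 1 n, V i j ω‖ < ε * ((m : ℝ) * n)) :
    ∀ ε > (0 : ℝ), Summable (fun q : ℕ × ℕ =>
      (1 / (((q.1 + 1 : ℕ) : ℝ) * ((q.2 + 1 : ℕ) : ℝ))) *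
        (μ {ω | ε * (((q.1 + 1 : ℕ) : ℝ) * ((q.2 + 1 : ℕ) : ℝ)) <
          ‖∑ i ∈ Finset.Icc (q.1 + 2) (2 * (q.1 + 1)),
            ∑ j ∈ Finset.Icc (q.2 + 2) (2 * (q.2 + 1)), V i j ω‖}).toReal) := by
  intro ε hε
  classical
  set ε₀ : ℝ := ε / 512 with hε₀def
  have hε₀ : 0 < ε₀ := by positivity
  -- big dyadic blocks
  set BB : ℕ → ℕ → Finset (ℕ × ℕ) :=
    fun k l => Finset.Ioc (2 ^ k) (2 ^ (k + 2)) ×ˢ Finset.Ioc (2 ^ l) (2 ^ (l + 2)) with hBBdef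
  have hBBsum : ∀ k l (ω : Ω), (∑ p ∈ BB k l, V p.1 p.2 ω)
      = bsum V (2 ^ k) (2 ^ (k + 2)) (2 ^ l) (2 ^ (l + 2)) ω := by
    intro k l ω
    exact Finset.sum_product (f := fun p => V p.1 p.2 ω) ..
  set A' : ℕ → ℕ → Set Ω := fun k l =>
    (fun ω => ∑ p ∈ BB k l, V p.1 p.2 ω) ⁻¹'
      {x : E | ε / 2 * (((2 : ℝ) ^ k) * ((2 : ℝ) ^ l)) < ‖x‖} with hA'def
  have hnormset : ∀ c : ℝ, MeasurableSet {x : E | c < ‖x‖} :=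
    fun c => measurableSet_lt measurable_const measurable_norm
  have hA'meas : ∀ k l, MeasurableSet (A' k l) := fun k l =>
    (Finset.measurable_sum _ fun p _ => hmeas p.1 p.2) (hnormset _)
  -- convenient form of the SLLN hypothesis
  have hIccIoc : ∀ x : ℕ, Finset.Icc 1 x = Finset.Ioc 0 x := fun x => Finset.Icc_add_one_left_eq_Ioc 0 x
  have hslln' : ∀ᵐ ω ∂μ, ∃ N : ℕ, ∀ x y : ℕ, 1 ≤ x → 1 ≤ y → N ≤ max x y →
      ‖bsum V 0 x 0 y ω‖ < ε₀ * ((x : ℝ) * y) := by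
    filter_upwards [hslln] with ω hω
    obtain ⟨N, hN⟩ := hω ε₀ hε₀
    refine ⟨N, fun x y hx hy hxy => ?_⟩
    have := hN x y hx hy hxy
    simpa [Stmt5Aux.bsum, hIccIoc] using this
  -- corner bounds
  have hScorners : ∀ (ω : Ω) (M : ℕ),
      (∀ x y : ℕ, 1 ≤ x → 1 ≤ y → M ≤ max x y → ‖bsum V 0 x 0 y ω‖ < ε₀ * ((x : ℝ) * y)) →
      ∀ a b c d : ℕ, 1 ≤ a → a ≤ b → 1 ≤ c → c ≤ d → M ≤ max a c →
        ‖bsum V a b c d ω‖ < 4 * ε₀ * ((b : ℝ) * d) := by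
    intro ω M hM a b c d ha hab hc hcd hmax
    have hcb : (a : ℝ) ≤ b := Nat.cast_le.2 hab
    have hcd' : (c : ℝ) ≤ d := Nat.cast_le.2 hcd
    have hca : (0 : ℝ) < a := by exact_mod_cast ha
    have hcc : (0 : ℝ) < c := by exact_mod_cast hc
    have h1 := hM b d (le_trans ha hab) (le_trans hc hcd)
      (le_trans hmax (max_le_max hab hcd))
    have h2 := hM a d ha (le_trans hc hcd) (le_trans hmax (max_le_max le_rfl hcd))
    have h3 := hM b c (le_trans ha hab) hc (le_trans hmax (max_le_max hab le_rfl))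
    have h4 := hM a c ha hc hmax
    have hnorm := norm_bsum_le V hab hcd ω
    have e1 : ε₀ * ((a : ℝ) * d) ≤ ε₀ * ((b : ℝ) * d) :=
      mul_le_mul_of_nonneg_left (mul_le_mul_of_nonneg_right hcb (d : ℕ).cast_nonneg) hε₀.le
    have e2 : ε₀ * ((b : ℝ) * c) ≤ ε₀ * ((b : ℝ) * d) :=
      mul_le_mul_of_nonneg_left (mul_le_mul_of_nonneg_left hcd' (b : ℕ).cast_nonneg) hε₀.le
    have e3 : ε₀ * ((a : ℝ) * c) ≤ ε₀ * ((b : ℝ) * d) :=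
      mul_le_mul_of_nonneg_left (mul_le_mul hcb hcd' (c : ℕ).cast_nonneg (b : ℕ).cast_nonneg) hε₀.le
    linarith
  -- bound for big block sums
  have hUbnd : ∀ (ω : Ω) (M : ℕ),
      (∀ x y : ℕ, 1 ≤ x → 1 ≤ y → M ≤ max x y → ‖bsum V 0 x 0 y ω‖ < ε₀ * ((x : ℝ) * y)) →
      ∀ k l : ℕ, M ≤ max (2 ^ k) (2 ^ l) →
      ‖∑ p ∈ BB k l, V p.1 p.2 ω‖ < ε / 8 * (((2 : ℝ) ^ k) * ((2 : ℝ) ^ l)) := by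
    intro ω M hM k l hkl
    have hb : (2 : ℕ) ^ k ≤ 2 ^ (k + 2) := Nat.pow_le_pow_right (by norm_num) (by omega)
    have hd : (2 : ℕ) ^ l ≤ 2 ^ (l + 2) := Nat.pow_le_pow_right (by norm_num) (by omega)
    have h := hScorners ω M hM (2 ^ k) (2 ^ (k + 2)) (2 ^ l) (2 ^ (l + 2))
      Nat.one_le_two_pow hb Nat.one_le_two_pow hd hkl
    rw [hBBsum]
    have c1 : (((2 : ℕ) ^ (k + 2) : ℕ) : ℝ) = 4 * (2 : ℝ) ^ k := by push_cast; ring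
    have c2 : (((2 : ℕ) ^ (l + 2) : ℕ) : ℝ) = 4 * (2 : ℝ) ^ l := by push_cast; ring
    rw [c1, c2] at h
    calc ‖bsum V (2 ^ k) (2 ^ (k + 2)) (2 ^ l) (2 ^ (l + 2)) ω‖
        < 4 * ε₀ * (4 * (2 : ℝ) ^ k * (4 * (2 : ℝ) ^ l)) := h
      _ = 64 * ε₀ * ((2 : ℝ) ^ k * (2 : ℝ) ^ l) := by ring
      _ = ε / 8 * ((2 : ℝ) ^ k * (2 : ℝ) ^ l) := by rw [hε₀def]; ring
  -- disjointness of big blocks at separated scales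
  have hBBdisj : ∀ k l k' l' : ℕ, (k + 2 ≤ k' ∨ k' + 2 ≤ k) ∨ (l + 2 ≤ l' ∨ l' + 2 ≤ l) →
      Disjoint (BB k l) (BB k' l') := by
    intro k l k' l' hsep
    have key : ∀ u v x : ℕ, u + 2 ≤ v → x ≤ 2 ^ (u + 2) → 2 ^ v < x → False := by
      intro u v x h h1 h2
      exact absurd (lt_of_le_of_lt (h1.trans (Nat.pow_le_pow_right (by norm_num) h)) h2)
        (lt_irrefl x)
    refine Finset.disjoint_left.2 fun p hp hp' => ?_
    simp only [hBBdef, Finset.mem_product, Finset.mem_Ioc] at hp hp'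
    rcases hsep with (h | h) | (h | h)
    · exact key k k' p.1 h hp.1.2 hp'.1.1
    · exact key k' k p.1 h hp'.1.2 hp.1.1
    · exact key l l' p.2 h hp.2.2 hp'.2.1
    · exact key l' l p.2 h hp'.2.2 hp.2.1
  -- one parity class
  set σ : ℕ ≃ ℕ × ℕ := (Denumerable.eqv (ℕ × ℕ)).symm with hσ
  have hclass : ∀ a b : ℕ, a < 2 → b < 2 →
      (∑' p : ℕ × ℕ, μ (A' (2 * p.1 + a) (2 * p.2 + b))) ≠ ∞ := by
    intro a b ha hb
    set s : ℕ → Set Ω := fun r => A' (2 * (σ r).1 + a) (2 * (σ r).2 + b) with hs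
    have hsm : ∀ r, MeasurableSet (s r) := fun r => hA'meas _ _
    have hdisj : ∀ r r', r ≠ r' →
        Disjoint (BB (2 * (σ r).1 + a) (2 * (σ r).2 + b))
          (BB (2 * (σ r').1 + a) (2 * (σ r').2 + b)) := by
      intro r r' hne
      have hne' : σ r ≠ σ r' := fun h => hne (σ.injective h)
      have hcomp : (σ r).1 ≠ (σ r').1 ∨ (σ r).2 ≠ (σ r').2 := by
        by_contra hcon
        push_neg at hcon
        exact hne' (Prod.ext hcon.1 hcon.2)
      apply hBBdisj
      rcases hcomp with h | h
      · left; omega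
      · right; omega
    have hIndep : iIndepSet s μ := by
      refine (iIndepSet_iff_meas_biInter hsm).2 fun J => ?_
      have := blocks_meas_biInter (μ := μ) hindep hmeas
        (B := fun r => BB (2 * (σ r).1 + a) (2 * (σ r).2 + b)) hdisj
        (C := fun r => {x : E |
          ε / 2 * (((2 : ℝ) ^ (2 * (σ r).1 + a)) * ((2 : ℝ) ^ (2 * (σ r).2 + b))) < ‖x‖})
        (fun r => hnormset _) J
      simpa only [hs, hA'def] using this
    have hlims : μ (limsup s atTop) = 0 := by
      refine measure_mono_null ?_ (ae_iff.1 hslln')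
      intro ω hω
      rw [Set.mem_setOf_eq]
      intro hP
      obtain ⟨N, hN⟩ := hP
      have hfreq : {r : ℕ | ω ∈ s r}.Infinite := by
        have h1 : ∃ᶠ r in atTop, ω ∈ s r := mem_limsup_iff_frequently_mem.1 hω
        rw [← Nat.cofinite_eq_atTop] at h1
        exact Filter.frequently_cofinite_iff_infinite.1 h1
      have hsub : {r : ℕ | ω ∈ s r} ⊆ σ ⁻¹' (Set.Iio N ×ˢ Set.Iio N) := by
        intro r hr
        simp only [Set.mem_preimage, Set.mem_prod, Set.mem_Iio]
        by_contra hcon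
        have hcase : N ≤ (σ r).1 ∨ N ≤ (σ r).2 := by
          rcases lt_or_ge (σ r).1 N with h | h
          · rcases lt_or_ge (σ r).2 N with h' | h'
            · exact absurd ⟨h, h'⟩ hcon
            · exact Or.inr h'
          · exact Or.inl h
        set k := 2 * (σ r).1 + a with hk
        set l := 2 * (σ r).2 + b with hl
        have hNk : N ≤ max (2 ^ k) (2 ^ l) := by
          rcases hcase with h | h
          · refine le_max_of_le_left (le_of_lt (lt_of_le_of_lt ?_ (Nat.lt_two_pow_self (n := k))))
            omega
          · refine le_max_of_le_right (le_of_lt (lt_of_le_of_lt ?_ (Nat.lt_two_pow_self (n := l))))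
            omega
        have hb2 := hUbnd ω N hN k l hNk
        have hr' : ε / 2 * (((2 : ℝ) ^ k) * ((2 : ℝ) ^ l)) < ‖∑ p ∈ BB k l, V p.1 p.2 ω‖ := by
          have := hr
          simp only [hs, hA'def, Set.mem_preimage, Set.mem_setOf_eq] at this
          exact this
        have hpos : (0 : ℝ) < (2 : ℝ) ^ k * (2 : ℝ) ^ l := by positivity
        have hcmp : ε / 8 * ((2 : ℝ) ^ k * (2 : ℝ) ^ l)
            ≤ ε / 2 * ((2 : ℝ) ^ k * (2 : ℝ) ^ l) := by nlinarith
        linarith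
      have hfin : {r : ℕ | ω ∈ s r}.Finite :=
        (((Set.finite_Iio N).prod (Set.finite_Iio N)).preimage σ.injective.injOn).subset hsub
      exact hfreq hfin
    have hne : (∑' r : ℕ, μ (s r)) ≠ ∞ := by
      intro htop
      have h1 := measure_limsup_eq_one hsm hIndep htop
      rw [hlims] at h1
      exact zero_ne_one h1
    have := Equiv.tsum_eq σ (fun p : ℕ × ℕ => μ (A' (2 * p.1 + a) (2 * p.2 + b)))
    rw [← this]
    exact hne
  -- total sum over all scales
  have hTtot : (∑' p : ℕ × ℕ, μ (A' p.1 p.2)) ≠ ∞ := by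
    have e1 : (∑' i : ℕ, ∑' j : ℕ, μ (A' (2 * i) (2 * j))) ≠ ∞ := by
      have h := hclass 0 0 (by norm_num) (by norm_num)
      simp only [add_zero] at h
      rw [ENNReal.tsum_prod (f := fun i j => μ (A' (2 * i) (2 * j)))] at h
      exact h
    have e2 : (∑' i : ℕ, ∑' j : ℕ, μ (A' (2 * i) (2 * j + 1))) ≠ ∞ := by
      have h := hclass 0 1 (by norm_num) (by norm_num)
      simp only [add_zero] at h
      rw [ENNReal.tsum_prod (f := fun i j => μ (A' (2 * i) (2 * j + 1)))] at h
      exact h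
    have e3 : (∑' i : ℕ, ∑' j : ℕ, μ (A' (2 * i + 1) (2 * j))) ≠ ∞ := by
      have h := hclass 1 0 (by norm_num) (by norm_num)
      simp only [add_zero] at h
      rw [ENNReal.tsum_prod (f := fun i j => μ (A' (2 * i + 1) (2 * j)))] at h
      exact h
    have e4 : (∑' i : ℕ, ∑' j : ℕ, μ (A' (2 * i + 1) (2 * j + 1))) ≠ ∞ := by
      have h := hclass 1 1 (by norm_num) (by norm_num)
      rw [ENNReal.tsum_prod (f := fun i j => μ (A' (2 * i + 1) (2 * j + 1)))] at h
      exact h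
    have hstep : (∑' p : ℕ × ℕ, μ (A' p.1 p.2))
        = ((∑' i : ℕ, ∑' j : ℕ, μ (A' (2 * i) (2 * j)))
            + ∑' i : ℕ, ∑' j : ℕ, μ (A' (2 * i) (2 * j + 1)))
          + ((∑' i : ℕ, ∑' j : ℕ, μ (A' (2 * i + 1) (2 * j)))
            + ∑' i : ℕ, ∑' j : ℕ, μ (A' (2 * i + 1) (2 * j + 1))) := by
      rw [ENNReal.tsum_prod (f := fun k l => μ (A' k l))]
      rw [tsum_even_odd (fun k => ∑' l : ℕ, μ (A' k l))]
      congr 1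
      · rw [tsum_congr (fun i => tsum_even_odd (fun l => μ (A' (2 * i) l))),
          ENNReal.tsum_add]
      · rw [tsum_congr (fun i => tsum_even_odd (fun l => μ (A' (2 * i + 1) l))),
          ENNReal.tsum_add]
    rw [hstep]
    exact ENNReal.add_ne_top.2 ⟨ENNReal.add_ne_top.2 ⟨e1, e2⟩, ENNReal.add_ne_top.2 ⟨e3, e4⟩⟩
  -- the median threshold
  set G : ℕ → Set Ω := fun M =>
    ⋃ (x : ℕ) (y : ℕ) (_ : 1 ≤ x ∧ 1 ≤ y ∧ M ≤ max x y),
      {ω : Ω | ε₀ * ((x : ℝ) * y) ≤ ‖bsum V 0 x 0 y ω‖} with hGdef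
  have hGmeas : ∀ M, MeasurableSet (G M) := fun M =>
    MeasurableSet.iUnion fun x => MeasurableSet.iUnion fun y => MeasurableSet.iUnion fun _ =>
      measurableSet_le measurable_const (measurable_bsum V hmeas 0 x 0 y).norm
  have hGanti : Antitone G := by
    intro M M' hMM'
    refine Set.iUnion_mono fun x => Set.iUnion_mono fun y => ?_
    refine Set.iUnion_subset fun hcond => ?_
    exact Set.subset_iUnion_of_subset ⟨hcond.1, hcond.2.1, le_trans hMM' hcond.2.2⟩ subset_rfl
  have hGnull : μ (⋂ M, G M) = 0 := by
    refine measure_mono_null ?_ (ae_iff.1 hslln')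
    intro ω hω
    simp only [Set.mem_iInter] at hω
    rw [Set.mem_setOf_eq]
    intro hP
    obtain ⟨N, hN⟩ := hP
    have hmem := hω N
    simp only [hGdef, Set.mem_iUnion] at hmem
    obtain ⟨x, y, ⟨hx, hy, hxy⟩, hle⟩ := hmem
    exact absurd (hN x y hx hy hxy) (not_lt.2 hle)
  have htend := tendsto_measure_iInter_atTop (μ := μ)
    (fun M => (hGmeas M).nullMeasurableSet) hGanti ⟨0, measure_ne_top μ _⟩
  rw [hGnull] at htend
  obtain ⟨M₁, hM₁⟩ := eventually_atTop.1
    (htend.eventually_lt_const (by norm_num : (0 : ℝ≥0∞) < 2⁻¹))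
  -- the blocks of the conclusion
  set blk : ℕ × ℕ → Finset (ℕ × ℕ) := fun q =>
    Finset.Ioc (q.1 + 1) (2 * (q.1 + 1)) ×ˢ Finset.Ioc (q.2 + 1) (2 * (q.2 + 1)) with hblkdef
  set Aset : ℕ × ℕ → Set Ω := fun q =>
    (fun ω => ∑ p ∈ blk q, V p.1 p.2 ω) ⁻¹'
      {x : E | ε * (((q.1 + 1 : ℕ) : ℝ) * ((q.2 + 1 : ℕ) : ℝ)) < ‖x‖} with hAsetdef
  have hgoodq : ∀ q : ℕ × ℕ, 2 * M₁ ≤ q.1 + 1 ∨ 2 * M₁ ≤ q.2 + 1 →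
      μ (Aset q) ≤ 2 * μ (A' (Nat.log 2 (q.1 + 1)) (Nat.log 2 (q.2 + 1))) := by
    intro q hqgood
    set m : ℕ := q.1 + 1 with hmdef
    set n : ℕ := q.2 + 1 with hndef
    set k : ℕ := Nat.log 2 m with hkdef
    set l : ℕ := Nat.log 2 n with hldef
    have hKm : 2 ^ k ≤ m := Nat.pow_log_le_self 2 (Nat.succ_ne_zero q.1)
    have hLn : 2 ^ l ≤ n := Nat.pow_log_le_self 2 (Nat.succ_ne_zero q.2)
    have hm2K : m < 2 ^ (k + 1) := Nat.lt_pow_succ_log_self (by norm_num) m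
    have hn2L : n < 2 ^ (l + 1) := Nat.lt_pow_succ_log_self (by norm_num) n
    have hp1 : (2 : ℕ) ^ (k + 1) = 2 * 2 ^ k := by ring
    have hq1 : (2 : ℕ) ^ (l + 1) = 2 * 2 ^ l := by ring
    have hmaxKL : M₁ ≤ max (2 ^ k) (2 ^ l) := by
      rcases hqgood with h | h
      · refine le_max_of_le_left ?_
        have h2 : 2 * M₁ ≤ 2 * 2 ^ k := by
          calc 2 * M₁ ≤ m := h
            _ ≤ 2 ^ (k + 1) := le_of_lt hm2K
            _ = 2 * 2 ^ k := hp1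
        exact Nat.le_of_mul_le_mul_left h2 (by norm_num)
      · refine le_max_of_le_right ?_
        have h2 : 2 * M₁ ≤ 2 * 2 ^ l := by
          calc 2 * M₁ ≤ n := h
            _ ≤ 2 ^ (l + 1) := le_of_lt hn2L
            _ = 2 * 2 ^ l := hq1
        exact Nat.le_of_mul_le_mul_left h2 (by norm_num)
    have hsub : blk q ⊆ BB k l := by
      have h1 : 2 * m ≤ 2 ^ (k + 2) := by
        calc 2 * m ≤ 2 * 2 ^ (k + 1) := Nat.mul_le_mul_left 2 (le_of_lt hm2K)
          _ = 2 ^ (k + 2) := by ring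
      have h2 : 2 * n ≤ 2 ^ (l + 2) := by
        calc 2 * n ≤ 2 * 2 ^ (l + 1) := Nat.mul_le_mul_left 2 (le_of_lt hn2L)
          _ = 2 ^ (l + 2) := by ring
      exact Finset.product_subset_product
        (Finset.Ioc_subset_Ioc hKm h1) (Finset.Ioc_subset_Ioc hLn h2)
    set X : Ω → E := fun ω => ∑ p ∈ blk q, V p.1 p.2 ω with hXdef
    set Y : Ω → E := fun ω => ∑ p ∈ BB k l \ blk q, V p.1 p.2 ω with hYdef
    have hXY : ∀ ω, X ω + Y ω = ∑ p ∈ BB k l, V p.1 p.2 ω := by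
      intro ω
      rw [hXdef, hYdef, add_comm]
      exact Finset.sum_sdiff hsub
    have hind := indep_finset_sums (μ := μ) hindep hmeas (blk q) (BB k l \ blk q)
      Finset.disjoint_sdiff
    have hXs : ∀ ω, X ω = bsum V m (2 * m) n (2 * n) ω := fun ω =>
      Finset.sum_product (f := fun p => V p.1 p.2 ω) ..
    -- real casts
    have hKr : ((2 : ℝ) ^ k) ≤ (m : ℝ) := by
      calc ((2 : ℝ) ^ k) = ((2 ^ k : ℕ) : ℝ) := by push_cast; ring
        _ ≤ (m : ℝ) := Nat.cast_le.2 hKm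
    have hLr : ((2 : ℝ) ^ l) ≤ (n : ℝ) := by
      calc ((2 : ℝ) ^ l) = ((2 ^ l : ℕ) : ℝ) := by push_cast; ring
        _ ≤ (n : ℝ) := Nat.cast_le.2 hLn
    have hKmr : (m : ℝ) ≤ 2 * (2 : ℝ) ^ k := by
      calc (m : ℝ) ≤ ((2 ^ (k + 1) : ℕ) : ℝ) := Nat.cast_le.2 (le_of_lt hm2K)
        _ = 2 * (2 : ℝ) ^ k := by push_cast; ring
    have hLnr : (n : ℝ) ≤ 2 * (2 : ℝ) ^ l := by
      calc (n : ℝ) ≤ ((2 ^ (l + 1) : ℕ) : ℝ) := Nat.cast_le.2 (le_of_lt hn2L)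
        _ = 2 * (2 : ℝ) ^ l := by push_cast; ring
    set CY : Set E := {x : E | ε / 2 * (((2 : ℝ) ^ k) * ((2 : ℝ) ^ l)) < ‖x‖} with hCYdef
    have hCYm : MeasurableSet CY := hnormset _
    -- Y is small with probability at least 1/2
    have hYsub : (Y ⁻¹' CY) ⊆ G (max (2 ^ k) (2 ^ l)) := by
      intro ω hω
      by_contra hωG
      have hMω : ∀ x y : ℕ, 1 ≤ x → 1 ≤ y → max (2 ^ k) (2 ^ l) ≤ max x y →
          ‖bsum V 0 x 0 y ω‖ < ε₀ * ((x : ℝ) * y) := by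
        intro x y hx hy hxy
        by_contra hc
        push_neg at hc
        exact hωG (Set.mem_iUnion.2 ⟨x, Set.mem_iUnion.2 ⟨y,
          Set.mem_iUnion.2 ⟨⟨hx, hy, hxy⟩, hc⟩⟩⟩)
      have hU := hUbnd ω _ hMω k l le_rfl
      have hXb := hScorners ω _ hMω m (2 * m) n (2 * n)
        (Nat.succ_le_succ (Nat.zero_le _)) (by omega)
        (Nat.succ_le_succ (Nat.zero_le _)) (by omega)
        (le_trans le_rfl (max_le_max hKm hLn))
      have hXr : ‖X ω‖ < 16 * ε₀ * ((m : ℝ) * (n : ℝ)) := by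
        rw [hXs ω]
        have hc : (((2 * m : ℕ) : ℝ)) = 2 * (m : ℝ) := by push_cast; ring
        have hc' : (((2 * n : ℕ) : ℝ)) = 2 * (n : ℝ) := by push_cast; ring
        calc ‖bsum V m (2 * m) n (2 * n) ω‖
            < 4 * ε₀ * (((2 * m : ℕ) : ℝ) * ((2 * n : ℕ) : ℝ)) := hXb
          _ = 16 * ε₀ * ((m : ℝ) * (n : ℝ)) := by rw [hc, hc']; ring
      have hYtri : ‖Y ω‖ ≤ ‖∑ p ∈ BB k l, V p.1 p.2 ω‖ + ‖X ω‖ := by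
        have heq : Y ω = (∑ p ∈ BB k l, V p.1 p.2 ω) - X ω := eq_sub_of_add_eq' (hXY ω)
        rw [heq]
        exact norm_sub_le _ _
      have hω' : ε / 2 * (((2 : ℝ) ^ k) * ((2 : ℝ) ^ l)) < ‖Y ω‖ := hω
      have hmn : (m : ℝ) * (n : ℝ) ≤ 4 * ((2 : ℝ) ^ k * (2 : ℝ) ^ l) := by
        calc (m : ℝ) * (n : ℝ) ≤ (2 * (2 : ℝ) ^ k) * (2 * (2 : ℝ) ^ l) :=
              mul_le_mul hKmr hLnr (Nat.cast_nonneg n) (by positivity)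
          _ = 4 * ((2 : ℝ) ^ k * (2 : ℝ) ^ l) := by ring
      have hmul : 16 * ε₀ * ((m : ℝ) * (n : ℝ))
          ≤ 16 * ε₀ * (4 * ((2 : ℝ) ^ k * (2 : ℝ) ^ l)) :=
        mul_le_mul_of_nonneg_left hmn (by positivity)
      have hPpos : (0 : ℝ) < ε * ((2 : ℝ) ^ k * (2 : ℝ) ^ l) := by positivity
      rw [hε₀def] at hmul
      rw [hε₀def] at hXr
      linarith
    have hYlt : μ (Y ⁻¹' CY) < 2⁻¹ := by
      refine lt_of_le_of_lt (measure_mono hYsub) ?_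
      exact hM₁ (max (2 ^ k) (2 ^ l)) hmaxKL
    have hYmeas : Measurable Y := Finset.measurable_sum _ fun p _ => hmeas p.1 p.2
    have hcompl : (2⁻¹ : ℝ≥0∞) ≤ μ (Y ⁻¹' CYᶜ) := by
      have h1 : μ (Y ⁻¹' CYᶜ) = 1 - μ (Y ⁻¹' CY) := by
        rw [Set.preimage_compl, measure_compl (hYmeas hCYm) (measure_ne_top μ _),
          measure_univ]
      rw [h1]
      have h3 : (2⁻¹ : ℝ≥0∞) = 1 - 2⁻¹ := by
        rw [← one_div]
        rw [ENNReal.sub_half (by norm_num)]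
      rw [h3]
      exact tsub_le_tsub_left (le_of_lt hYlt) 1
    have hinter : Aset q ∩ Y ⁻¹' CYᶜ ⊆ A' k l := by
      intro ω hω
      obtain ⟨h1, h2⟩ := hω
      have h1' : ε * ((m : ℝ) * (n : ℝ)) < ‖X ω‖ := h1
      have h2' : ‖Y ω‖ ≤ ε / 2 * (((2 : ℝ) ^ k) * ((2 : ℝ) ^ l)) := by
        have := h2
        simp only [Set.mem_preimage, Set.mem_compl_iff, hCYdef, Set.mem_setOf_eq,
          not_lt] at this
        exact this
      have hXU : ‖X ω‖ ≤ ‖∑ p ∈ BB k l, V p.1 p.2 ω‖ + ‖Y ω‖ := by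
        have heq : X ω = (∑ p ∈ BB k l, V p.1 p.2 ω) - Y ω := eq_sub_of_add_eq (hXY ω)
        rw [heq]
        exact norm_sub_le _ _
      have hKLmn : ε * ((2 : ℝ) ^ k * (2 : ℝ) ^ l) ≤ ε * ((m : ℝ) * (n : ℝ)) :=
        mul_le_mul_of_nonneg_left
          (mul_le_mul hKr hLr (by positivity) (Nat.cast_nonneg m)) hε.le
      show ε / 2 * (((2 : ℝ) ^ k) * ((2 : ℝ) ^ l)) < ‖∑ p ∈ BB k l, V p.1 p.2 ω‖
      have hPpos : (0 : ℝ) < ε * ((2 : ℝ) ^ k * (2 : ℝ) ^ l) := by positivity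
      linarith
    have hkey : μ (Aset q) * 2⁻¹ ≤ μ (A' k l) := by
      calc μ (Aset q) * 2⁻¹ ≤ μ (Aset q) * μ (Y ⁻¹' CYᶜ) := mul_le_mul_right hcompl _
        _ = μ (Aset q ∩ Y ⁻¹' CYᶜ) :=
            (hind.measure_inter_preimage_eq_mul _ _ (hnormset _) hCYm.compl).symm
        _ ≤ μ (A' k l) := measure_mono hinter
    have h2 := mul_le_mul_left hkey 2
    rw [mul_assoc, ENNReal.inv_mul_cancel two_ne_zero ENNReal.ofNat_ne_top, mul_one] at h2
    exact le_trans h2 (le_of_eq (mul_comm _ _))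
  -- assembling everything
  set F : ℕ × ℕ → ℝ≥0∞ := fun q =>
    (((q.1 + 1 : ℕ) : ℝ≥0∞))⁻¹ * ((((q.2 + 1 : ℕ) : ℝ≥0∞))⁻¹ * μ (Aset q)) with hFdef
  have hFne : (∑' q : ℕ × ℕ, F q) ≠ ∞ := by
    have hFB : ∀ q : ℕ × ℕ, F q ≤
        (if q.1 + 1 < 2 * M₁ ∧ q.2 + 1 < 2 * M₁ then (1 : ℝ≥0∞) else 0)
          + 2 * ((((q.1 + 1 : ℕ) : ℝ≥0∞))⁻¹ * ((((q.2 + 1 : ℕ) : ℝ≥0∞))⁻¹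
              * μ (A' (Nat.log 2 (q.1 + 1)) (Nat.log 2 (q.2 + 1))))) := by
      intro q
      by_cases hcase : q.1 + 1 < 2 * M₁ ∧ q.2 + 1 < 2 * M₁
      · rw [if_pos hcase]
        have hone : ∀ r : ℕ, (((r + 1 : ℕ) : ℝ≥0∞))⁻¹ ≤ 1 :=
          fun r => ENNReal.inv_le_one.2 (by exact_mod_cast Nat.succ_le_succ (Nat.zero_le r))
        have h1 : F q ≤ 1 := by
          rw [hFdef]
          calc (((q.1 + 1 : ℕ) : ℝ≥0∞))⁻¹ * ((((q.2 + 1 : ℕ) : ℝ≥0∞))⁻¹ * μ (Aset q))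
              ≤ 1 * (1 * 1) := by
                exact mul_le_mul' (hone q.1) (mul_le_mul' (hone q.2) prob_le_one)
            _ = 1 := by ring
        exact le_trans h1 le_self_add
      · rw [if_neg hcase, zero_add]
        have hgood : 2 * M₁ ≤ q.1 + 1 ∨ 2 * M₁ ≤ q.2 + 1 := by omega
        have h2 := hgoodq q hgood
        rw [hFdef]
        calc (((q.1 + 1 : ℕ) : ℝ≥0∞))⁻¹ * ((((q.2 + 1 : ℕ) : ℝ≥0∞))⁻¹ * μ (Aset q))
            ≤ (((q.1 + 1 : ℕ) : ℝ≥0∞))⁻¹ * ((((q.2 + 1 : ℕ) : ℝ≥0∞))⁻¹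
                * (2 * μ (A' (Nat.log 2 (q.1 + 1)) (Nat.log 2 (q.2 + 1))))) :=
              mul_le_mul_right (mul_le_mul_right h2 _) _
          _ = 2 * ((((q.1 + 1 : ℕ) : ℝ≥0∞))⁻¹ * ((((q.2 + 1 : ℕ) : ℝ≥0∞))⁻¹
                * μ (A' (Nat.log 2 (q.1 + 1)) (Nat.log 2 (q.2 + 1))))) := by ring
    have hBnd1 : (∑' q : ℕ × ℕ,
        (if q.1 + 1 < 2 * M₁ ∧ q.2 + 1 < 2 * M₁ then (1 : ℝ≥0∞) else 0)) ≠ ∞ := by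
      rw [tsum_eq_sum (s := Finset.range (2 * M₁) ×ˢ Finset.range (2 * M₁))
        (fun b hb => by
          rw [if_neg]
          intro hc
          exact hb (Finset.mem_product.2 ⟨Finset.mem_range.2 (by omega),
            Finset.mem_range.2 (by omega)⟩))]
      exact (ENNReal.sum_lt_top.2 fun a _ => by split <;> simp).ne
    have hBnd2 : (∑' q : ℕ × ℕ, ((((q.1 + 1 : ℕ) : ℝ≥0∞))⁻¹ * ((((q.2 + 1 : ℕ) : ℝ≥0∞))⁻¹
        * μ (A' (Nat.log 2 (q.1 + 1)) (Nat.log 2 (q.2 + 1))))))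
        ≤ ∑' p : ℕ × ℕ, μ (A' p.1 p.2) := by
      rw [ENNReal.tsum_prod (f := fun i j => (((i + 1 : ℕ) : ℝ≥0∞))⁻¹
        * ((((j + 1 : ℕ) : ℝ≥0∞))⁻¹ * μ (A' (Nat.log 2 (i + 1)) (Nat.log 2 (j + 1)))))]
      rw [ENNReal.tsum_prod (f := fun k l => μ (A' k l))]
      calc ∑' i : ℕ, ∑' j : ℕ, (((i + 1 : ℕ) : ℝ≥0∞))⁻¹
            * ((((j + 1 : ℕ) : ℝ≥0∞))⁻¹ * μ (A' (Nat.log 2 (i + 1)) (Nat.log 2 (j + 1))))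
          = ∑' i : ℕ, (((i + 1 : ℕ) : ℝ≥0∞))⁻¹
            * ∑' j : ℕ, (((j + 1 : ℕ) : ℝ≥0∞))⁻¹ * μ (A' (Nat.log 2 (i + 1)) (Nat.log 2 (j + 1))) := by
            exact tsum_congr fun i => ENNReal.tsum_mul_left
        _ ≤ ∑' i : ℕ, (((i + 1 : ℕ) : ℝ≥0∞))⁻¹
            * ∑' l : ℕ, μ (A' (Nat.log 2 (i + 1)) l) := by
            refine ENNReal.tsum_le_tsum fun i => mul_le_mul_right ?_ _
            exact tsum_log_le (fun l => μ (A' (Nat.log 2 (i + 1)) l))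
        _ ≤ ∑' k : ℕ, ∑' l : ℕ, μ (A' k l) :=
            tsum_log_le (fun k => ∑' l : ℕ, μ (A' k l))
    have hle : (∑' q : ℕ × ℕ, F q)
        ≤ (∑' q : ℕ × ℕ, (if q.1 + 1 < 2 * M₁ ∧ q.2 + 1 < 2 * M₁ then (1 : ℝ≥0∞) else 0))
          + 2 * ∑' q : ℕ × ℕ, ((((q.1 + 1 : ℕ) : ℝ≥0∞))⁻¹ * ((((q.2 + 1 : ℕ) : ℝ≥0∞))⁻¹
              * μ (A' (Nat.log 2 (q.1 + 1)) (Nat.log 2 (q.2 + 1))))) := by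
      calc (∑' q : ℕ × ℕ, F q)
        ≤ ∑' q : ℕ × ℕ, ((if q.1 + 1 < 2 * M₁ ∧ q.2 + 1 < 2 * M₁ then (1 : ℝ≥0∞) else 0)
          + 2 * ((((q.1 + 1 : ℕ) : ℝ≥0∞))⁻¹ * ((((q.2 + 1 : ℕ) : ℝ≥0∞))⁻¹
              * μ (A' (Nat.log 2 (q.1 + 1)) (Nat.log 2 (q.2 + 1)))))) :=
          ENNReal.tsum_le_tsum hFB
      _ = (∑' q : ℕ × ℕ, (if q.1 + 1 < 2 * M₁ ∧ q.2 + 1 < 2 * M₁ then (1 : ℝ≥0∞) else 0))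
          + ∑' q : ℕ × ℕ, 2 * ((((q.1 + 1 : ℕ) : ℝ≥0∞))⁻¹ * ((((q.2 + 1 : ℕ) : ℝ≥0∞))⁻¹
              * μ (A' (Nat.log 2 (q.1 + 1)) (Nat.log 2 (q.2 + 1))))) := ENNReal.tsum_add
      _ = (∑' q : ℕ × ℕ, (if q.1 + 1 < 2 * M₁ ∧ q.2 + 1 < 2 * M₁ then (1 : ℝ≥0∞) else 0))
          + 2 * ∑' q : ℕ × ℕ, ((((q.1 + 1 : ℕ) : ℝ≥0∞))⁻¹ * ((((q.2 + 1 : ℕ) : ℝ≥0∞))⁻¹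
              * μ (A' (Nat.log 2 (q.1 + 1)) (Nat.log 2 (q.2 + 1))))) := by
            rw [ENNReal.tsum_mul_left]
    exact ne_top_of_le_ne_top (ENNReal.add_ne_top.2 ⟨hBnd1,
      ENNReal.mul_ne_top (by norm_num) (ne_top_of_le_ne_top hTtot hBnd2)⟩) hle
  -- translate the goal
  have hgoal : (fun q : ℕ × ℕ =>
      (1 / (((q.1 + 1 : ℕ) : ℝ) * ((q.2 + 1 : ℕ) : ℝ))) *
        (μ {ω | ε * (((q.1 + 1 : ℕ) : ℝ) * ((q.2 + 1 : ℕ) : ℝ)) <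
          ‖∑ i ∈ Finset.Icc (q.1 + 2) (2 * (q.1 + 1)),
            ∑ j ∈ Finset.Icc (q.2 + 2) (2 * (q.2 + 1)), V i j ω‖}).toReal)
      = fun q : ℕ × ℕ => (F q).toReal := by
    funext q
    have hset : {ω | ε * (((q.1 + 1 : ℕ) : ℝ) * ((q.2 + 1 : ℕ) : ℝ)) <
        ‖∑ i ∈ Finset.Icc (q.1 + 2) (2 * (q.1 + 1)),
          ∑ j ∈ Finset.Icc (q.2 + 2) (2 * (q.2 + 1)), V i j ω‖} = Aset q := by
      rw [hAsetdef]
      ext ω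
      simp only [Set.mem_preimage, Set.mem_setOf_eq]
      rw [show (∑ p ∈ blk q, V p.1 p.2 ω)
          = ∑ i ∈ Finset.Ioc (q.1 + 1) (2 * (q.1 + 1)),
            ∑ j ∈ Finset.Ioc (q.2 + 1) (2 * (q.2 + 1)), V i j ω from
        Finset.sum_product (f := fun p => V p.1 p.2 ω) ..]
      rw [show Finset.Icc (q.1 + 2) (2 * (q.1 + 1))
          = Finset.Ioc (q.1 + 1) (2 * (q.1 + 1)) from Finset.Icc_add_one_left_eq_Ioc _ _]
      rw [show Finset.Icc (q.2 + 2) (2 * (q.2 + 1))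
          = Finset.Ioc (q.2 + 1) (2 * (q.2 + 1)) from Finset.Icc_add_one_left_eq_Ioc _ _]
    rw [hset, hFdef]
    rw [ENNReal.toReal_mul, ENNReal.toReal_mul, ENNReal.toReal_inv, ENNReal.toReal_inv,
      ENNReal.toReal_natCast, ENNReal.toReal_natCast, one_div, mul_inv, mul_assoc]
  rw [hgoal]
  exact ENNReal.summable_toReal hFne
end

section
/- In the Banach space ℓ¹, let v^{(k)} be the k-th standard unit vector, let φ : ℕ×ℕ → ℕ be a bijection, and let {V_{mn}} be independent random elements with P(V_{mn} = v^{(φ(m,n))}) = P(V_{mn} = −v^{(φ(m,n))}) = 1/2. Then for 1 < p ≤ 2: (a) ∑_{m,n} E‖V_{mn}‖^p/(mn)^p < ∞; (b) ‖S_{mn}‖ = ∑_{i≤m,j≤n} ‖V_{ij}‖... in fact ‖S_{mn}‖_{ℓ¹} = mn almost surely; (c) E‖S_{mn}/(mn)^{(p+1)/p}‖^p = 1/(mn), so ∑_{m,n} E‖S_{mn}/(mn)^{(p+1)/p}‖^p = ∞, while E‖S_{mn}/(mn)^{(p+1)/p}‖^p → 0 as m ∨ n → ∞ and P(‖S_{mn}‖/(mn)^{(p+1)/p}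 > ε) = 0 for all large m ∨ n. -/
open MeasureTheory ProbabilityTheory Finset
open scoped ENNReal
set_option synthInstance.maxHeartbeats 1000000
set_option maxHeartbeats 1000000

lemma keynorm (φ : ℕ × ℕ → ℕ) (hφ : Function.Injective φ)
    (S : Finset (ℕ × ℕ)) (s : ℕ × ℕ → ℝ) (hs : ∀ q ∈ S, |s q| = 1) :
    ‖(∑ q ∈ S, lp.single 1 (φ q) (s q) : lp (fun _ : ℕ => ℝ) 1)‖ = (S.card : ℝ) := by
  classical
  set g : ℕ → ℝ := fun k => s (Function.invFun φ k) with hg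
  have hgs : ∀ q ∈ S, g (φ q) = s q := fun q _ => by
    simp [hg, Function.leftInverse_invFun hφ q]
  have h1 : ∑ q ∈ S, lp.single 1 (φ q) (s q)
      = ∑ k ∈ S.image φ, lp.single (1 : ℝ≥0∞) k (g k) := by
    rw [Finset.sum_image (fun a _ b _ h => hφ h)]
    exact Finset.sum_congr rfl fun q hq => by rw [hgs q hq]
  have hp : (0:ℝ) < (1 : ℝ≥0∞).toReal := by norm_num
  have h2 := lp.norm_sum_single (E := fun _ : ℕ => ℝ) hp g (S.image φ)
  simp only [ENNReal.toReal_one, Real.rpow_one] at h2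
  rw [h1, h2, Finset.sum_image (fun a _ b _ h => hφ h)]
  have : ∀ q ∈ S, ‖g (φ q)‖ = 1 := fun q hq => by rw [hgs q hq, Real.norm_eq_abs, hs q hq]
  rw [Finset.sum_congr rfl this, Finset.sum_const, nsmul_eq_mul, mul_one]

theorem stmt10
    {Ω : Type*} [MeasurableSpace Ω] (μ : Measure Ω) [IsProbabilityMeasure μ]
    [MeasurableSpace (lp (fun _ : ℕ => ℝ) 1)] [BorelSpace (lp (fun _ : ℕ => ℝ) 1)]
    (φ : ℕ × ℕ → ℕ) (hφ : Function.Bijective φ)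
    (V : ℕ → ℕ → Ω → lp (fun _ : ℕ => ℝ) 1) (hmeas : ∀ m n, Measurable (V m n))
    (hindep : iIndepFun (fun q : ℕ × ℕ => V q.1 q.2) μ)
    (hdist : ∀ m n : ℕ, 1 ≤ m → 1 ≤ n →
      μ {ω | V m n ω = lp.single 1 (φ (m, n)) (1 : ℝ)} = 1 / 2 ∧
      μ {ω | V m n ω = -lp.single 1 (φ (m, n)) (1 : ℝ)} = 1 / 2)
    (p : ℝ) (hp1 : 1 < p) (hp2 : p ≤ 2) :
    (Summable (fun q : ℕ × ℕ =>
      (∫ ω, ‖V (q.1 + 1) (q.2 + 1) ω‖ ^ p ∂μ) /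
        (((q.1 + 1 : ℕ) : ℝ) ^ p * ((q.2 + 1 : ℕ) : ℝ) ^ p))) ∧
    (∀ m n : ℕ, 1 ≤ m → 1 ≤ n → ∀ᵐ ω ∂μ,
      ‖∑ i ∈ Finset.Icc 1 m, ∑ j ∈ Finset.Icc 1 n, V i j ω‖ = (m : ℝ) * n) ∧
    (∀ m n : ℕ, 1 ≤ m → 1 ≤ n →
      (∫ ω, (‖∑ i ∈ Finset.Icc 1 m, ∑ j ∈ Finset.Icc 1 n, V i j ω‖ /
        ((m : ℝ) * n) ^ ((p + 1) / p)) ^ p ∂μ) = 1 / ((m : ℝ) * n)) ∧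
    (¬ Summable (fun q : ℕ × ℕ =>
      ∫ ω, (‖∑ i ∈ Finset.Icc 1 (q.1 + 1), ∑ j ∈ Finset.Icc 1 (q.2 + 1), V i j ω‖ /
        (((q.1 + 1 : ℕ) : ℝ) * ((q.2 + 1 : ℕ) : ℝ)) ^ ((p + 1) / p)) ^ p ∂μ)) ∧
    (∀ ε > (0 : ℝ), ∃ N : ℕ, ∀ m n : ℕ, 1 ≤ m → 1 ≤ n → N ≤ max m n →
      (∫ ω, (‖∑ i ∈ Finset.Icc 1 m, ∑ j ∈ Finset.Icc 1 n, V i j ω‖ /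
        ((m : ℝ) * n) ^ ((p + 1) / p)) ^ p ∂μ) < ε) ∧
    (∀ ε > (0 : ℝ), ∃ N : ℕ, ∀ m n : ℕ, 1 ≤ m → 1 ≤ n → N ≤ max m n →
      μ {ω | ε * ((m : ℝ) * n) ^ ((p + 1) / p) <
        ‖∑ i ∈ Finset.Icc 1 m, ∑ j ∈ Finset.Icc 1 n, V i j ω‖} = 0) := by
  classical
  have hp0 : p ≠ 0 := by positivity
  -- step 1: sign a.e.
  have hsign : ∀ m n : ℕ, 1 ≤ m → 1 ≤ n → ∀ᵐ ω ∂μ,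
      V m n ω = lp.single 1 (φ (m, n)) (1:ℝ) ∨ V m n ω = -lp.single 1 (φ (m, n)) (1:ℝ) := by
    intro m n hm hn
    obtain ⟨hA, hB⟩ := hdist m n hm hn
    set e : lp (fun _ : ℕ => ℝ) 1 := lp.single 1 (φ (m,n)) (1:ℝ) with he
    have hene : e ≠ -e := by
      intro h
      have h1 : e (φ (m,n)) = 1 := lp.single_apply_self _ _ _
      have h2 : (-e) (φ (m,n)) = -1 := by
        have := lp.coeFn_neg e
        have h3 : (-e) (φ (m,n)) = -(e (φ (m,n))) := by rw [this]; rfl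
        rw [h3, h1]
      rw [h] at h1
      rw [h2] at h1
      norm_num at h1
    have hAm : MeasurableSet {ω | V m n ω = e} := by
      have hset : {ω | V m n ω = e} = V m n ⁻¹' {e} := by ext ω; simp
      rw [hset]; exact hmeas m n isClosed_singleton.measurableSet
    have hBm : MeasurableSet {ω | V m n ω = -e} := by
      have hset : {ω | V m n ω = -e} = V m n ⁻¹' {-e} := by ext ω; simp
      rw [hset]; exact hmeas m n isClosed_singleton.measurableSet
    have hdisj : Disjoint {ω | V m n ω = e} {ω | V m n ω = -e} := by
      rw [Set.disjoint_left]
      intro ω h1 h2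
      exact hene ((h1 : V m n ω = e).symm.trans h2)
    have hunion : μ ({ω | V m n ω = e} ∪ {ω | V m n ω = -e}) = 1 := by
      rw [measure_union hdisj hBm]
      rw [show μ {ω | V m n ω = e} = 1/2 from hA, show μ {ω | V m n ω = -e} = 1/2 from hB,
        ENNReal.add_halves]
    have h0 : μ ({ω | V m n ω = e} ∪ {ω | V m n ω = -e})ᶜ = 0 := by
      rw [measure_compl (hAm.union hBm) (measure_ne_top μ _), hunion, measure_univ, tsub_self]
    rw [ae_iff]
    convert h0 using 2
    ext ω; simp
  -- step 2: a.e. all signs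
  have hall : ∀ m n : ℕ, 1 ≤ m → 1 ≤ n → ∀ᵐ ω ∂μ, ∀ i, i ∈ Finset.Icc 1 m → ∀ j, j ∈ Finset.Icc 1 n →
      (V i j ω = lp.single 1 (φ (i, j)) (1:ℝ) ∨ V i j ω = -lp.single 1 (φ (i, j)) (1:ℝ)) := by
    intro m n hm hn
    refine ae_all_iff.2 fun i => ae_all_iff.2 fun hi => ae_all_iff.2 fun j => ae_all_iff.2 fun hj => ?_
    exact hsign i j (Finset.mem_Icc.1 hi).1 (Finset.mem_Icc.1 hj).1
  -- step 3: a.e. norm of sum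
  have hnormae : ∀ m n : ℕ, 1 ≤ m → 1 ≤ n → ∀ᵐ ω ∂μ,
      ‖∑ i ∈ Finset.Icc 1 m, ∑ j ∈ Finset.Icc 1 n, V i j ω‖ = (m : ℝ) * n := by
    intro m n hm hn
    refine (hall m n hm hn).mono fun ω hω => ?_
    set S : Finset (ℕ × ℕ) := Finset.Icc 1 m ×ˢ Finset.Icc 1 n with hS
    set s : ℕ × ℕ → ℝ := fun q => if V q.1 q.2 ω = lp.single 1 (φ q) 1 then 1 else -1 with hsdef
    have h1 : ∀ q ∈ S, V q.1 q.2 ω = lp.single 1 (φ q) (s q) := by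
      intro q hq
      rcases Finset.mem_product.1 hq with ⟨hq1, hq2⟩
      by_cases hc : V q.1 q.2 ω = lp.single 1 (φ q) 1
      · simp only [hsdef, if_pos hc]; exact hc
      · simp only [hsdef, if_neg hc]
        rcases hω q.1 hq1 q.2 hq2 with h | h
        · exact absurd h hc
        · rw [h, show ((-1 : ℝ)) = -(1:ℝ) from rfl, lp.single_neg]
    have hs1 : ∀ q ∈ S, |s q| = 1 := by
      intro q _
      simp only [hsdef]
      split_ifs <;> norm_num
    calc ‖∑ i ∈ Finset.Icc 1 m, ∑ j ∈ Finset.Icc 1 n, V i j ω‖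
        = ‖∑ q ∈ S, V q.1 q.2 ω‖ := by rw [hS, Finset.sum_product]
      _ = ‖(∑ q ∈ S, lp.single 1 (φ q) (s q) : lp (fun _ : ℕ => ℝ) 1)‖ := by
          rw [Finset.sum_congr rfl h1]
      _ = (S.card : ℝ) := keynorm φ hφ.1 S s hs1
      _ = (m : ℝ) * n := by
          rw [hS, Finset.card_product, Nat.card_Icc, Nat.card_Icc]
          simp
  -- constant computation
  have hconst : ∀ r : ℝ, 0 < r → (r / r ^ ((p+1)/p)) ^ p = 1 / r := by
    intro r hr
    rw [Real.div_rpow hr.le (Real.rpow_nonneg hr.le _), ← Real.rpow_mul hr.le,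
      div_mul_cancel₀ _ hp0, ← Real.rpow_sub hr]
    have h1 : p - (p + 1) = -1 := by ring
    rw [h1, Real.rpow_neg_one, one_div]
  -- part (c) as hc
  have hc : ∀ m n : ℕ, 1 ≤ m → 1 ≤ n →
      (∫ ω, (‖∑ i ∈ Finset.Icc 1 m, ∑ j ∈ Finset.Icc 1 n, V i j ω‖ /
        ((m : ℝ) * n) ^ ((p + 1) / p)) ^ p ∂μ) = 1 / ((m : ℝ) * n) := by
    intro m n hm hn
    have hr : (0:ℝ) < (m : ℝ) * n :=
      mul_pos (by exact_mod_cast hm) (by exact_mod_cast hn)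
    have heq : (fun ω => (‖∑ i ∈ Finset.Icc 1 m, ∑ j ∈ Finset.Icc 1 n, V i j ω‖ /
        ((m : ℝ) * n) ^ ((p + 1) / p)) ^ p) =ᵐ[μ] (fun _ => 1 / ((m : ℝ) * n)) := by
      refine (hnormae m n hm hn).mono fun ω h => ?_
      dsimp only
      rw [h, hconst _ hr]
    rw [integral_congr_ae heq]
    simp
  -- integral of ‖V‖^p = 1
  have hVint : ∀ m n : ℕ, 1 ≤ m → 1 ≤ n → (∫ ω, ‖V m n ω‖ ^ p ∂μ) = 1 := by
    intro m n hm hn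
    have hone : (fun ω => ‖V m n ω‖ ^ p) =ᵐ[μ] (fun _ => (1:ℝ)) := by
      refine (hsign m n hm hn).mono fun ω h => ?_
      have hp01 : (0:ℝ) < (1 : ℝ≥0∞).toReal := by norm_num
      have hns : ‖lp.single (E := fun _ : ℕ => ℝ) 1 (φ (m,n)) (1:ℝ)‖ = 1 := by
        have := lp.norm_single (E := fun _ : ℕ => ℝ) (p := 1) zero_lt_one (φ (m,n)) (1:ℝ)
        simpa using this
      dsimp only
      rcases h with h | h <;> rw [h]
      · rw [hns, Real.one_rpow]
      · rw [norm_neg, hns, Real.one_rpow]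
    rw [integral_congr_ae hone]
    simp
  -- part (a)
  have parta : Summable (fun q : ℕ × ℕ =>
      (∫ ω, ‖V (q.1 + 1) (q.2 + 1) ω‖ ^ p ∂μ) /
        (((q.1 + 1 : ℕ) : ℝ) ^ p * ((q.2 + 1 : ℕ) : ℝ) ^ p)) := by
    have hsum1 : Summable (fun m : ℕ => 1 / ((m + 1 : ℕ) : ℝ) ^ p) := by
      have hbase : Summable (fun n : ℕ => 1 / (n : ℝ) ^ p) :=
        Real.summable_one_div_nat_rpow.mpr hp1
      exact (summable_nat_add_iff 1).2 hbase
    have base : Summable (fun q : ℕ × ℕ =>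
        (1 / ((q.1 + 1 : ℕ) : ℝ) ^ p) * (1 / ((q.2 + 1 : ℕ) : ℝ) ^ p)) :=
      Summable.mul_of_nonneg hsum1 hsum1 (fun m => by positivity) (fun n => by positivity)
    refine base.congr fun q => ?_
    rw [hVint (q.1 + 1) (q.2 + 1) (Nat.le_add_left _ _) (Nat.le_add_left _ _),
      one_div_mul_one_div]
  -- part (d)
  have partd : ¬ Summable (fun q : ℕ × ℕ =>
      ∫ ω, (‖∑ i ∈ Finset.Icc 1 (q.1 + 1), ∑ j ∈ Finset.Icc 1 (q.2 + 1), V i j ω‖ /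
        (((q.1 + 1 : ℕ) : ℝ) * ((q.2 + 1 : ℕ) : ℝ)) ^ ((p + 1) / p)) ^ p ∂μ) := by
    intro hsum
    have hinj : Function.Injective (fun m : ℕ => ((m, 0) : ℕ × ℕ)) :=
      fun a b h => congrArg Prod.fst h
    have h2 := hsum.comp_injective hinj
    have h3 : Summable (fun m : ℕ => 1 / (((m + 1 : ℕ) : ℝ) * ((0 + 1 : ℕ) : ℝ))) := by
      refine h2.congr fun m => ?_
      simp only [Function.comp_apply]
      exact hc (m + 1) (0 + 1) (Nat.le_add_left _ _) (Nat.le_add_left _ _)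
    have h4 : Summable (fun m : ℕ => 1 / ((m + 1 : ℕ) : ℝ)) := by
      refine h3.congr fun m => ?_
      norm_num
    have h5 : Summable (fun n : ℕ => 1 / (n : ℝ)) := (summable_nat_add_iff 1).1 h4
    exact Real.not_summable_one_div_natCast h5
  -- max ≤ product
  have hmaxle : ∀ m n : ℕ, 1 ≤ m → 1 ≤ n → max m n ≤ m * n := fun m n hm hn =>
    max_le (Nat.le_mul_of_pos_right m hn) (Nat.le_mul_of_pos_left n hm)
  -- part (e)
  have parte : ∀ ε > (0 : ℝ), ∃ N : ℕ, ∀ m n : ℕ, 1 ≤ m → 1 ≤ n → N ≤ max m n →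
      (∫ ω, (‖∑ i ∈ Finset.Icc 1 m, ∑ j ∈ Finset.Icc 1 n, V i j ω‖ /
        ((m : ℝ) * n) ^ ((p + 1) / p)) ^ p ∂μ) < ε := by
    intro ε hε
    refine ⟨⌈1/ε⌉₊ + 1, fun m n hm hn hN => ?_⟩
    rw [hc m n hm hn]
    have hr : (0:ℝ) < (m : ℝ) * n :=
      mul_pos (by exact_mod_cast hm) (by exact_mod_cast hn)
    have hmn : (⌈1/ε⌉₊ + 1 : ℕ) ≤ m * n := hN.trans (hmaxle m n hm hn)
    have h1 : (1/ε : ℝ) < ((m * n : ℕ) : ℝ) := by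
      calc (1/ε : ℝ) < ((⌈1/ε⌉₊ + 1 : ℕ) : ℝ) := by
            push_cast
            exact lt_of_le_of_lt (Nat.le_ceil _) (by linarith)
        _ ≤ ((m * n : ℕ) : ℝ) := by exact_mod_cast hmn
    have h1' : (1/ε : ℝ) < (m : ℝ) * n := by push_cast at h1; exact h1
    rw [div_lt_iff₀ hr, mul_comm]
    have := (div_lt_iff₀ hε).1 h1'
    linarith
  -- part (f)
  have partf : ∀ ε > (0 : ℝ), ∃ N : ℕ, ∀ m n : ℕ, 1 ≤ m → 1 ≤ n → N ≤ max m n →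
      μ {ω | ε * ((m : ℝ) * n) ^ ((p + 1) / p) <
        ‖∑ i ∈ Finset.Icc 1 m, ∑ j ∈ Finset.Icc 1 n, V i j ω‖} = 0 := by
    intro ε hε
    refine ⟨⌈(1/ε)^p⌉₊ + 1, fun m n hm hn hN => ?_⟩
    have hr : (0:ℝ) < (m : ℝ) * n :=
      mul_pos (by exact_mod_cast hm) (by exact_mod_cast hn)
    set r : ℝ := (m : ℝ) * n with hrdef
    have hmn : (⌈(1/ε)^p⌉₊ + 1 : ℕ) ≤ m * n := hN.trans (hmaxle m n hm hn)
    have hx : ((1/ε):ℝ) ^ p ≤ r := by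
      calc ((1/ε):ℝ) ^ p ≤ ((⌈(1/ε)^p⌉₊ + 1 : ℕ) : ℝ) := by
            push_cast
            exact le_trans (Nat.le_ceil _) (by linarith [Nat.le_ceil ((1/ε)^p)])
        _ ≤ ((m * n : ℕ) : ℝ) := by exact_mod_cast hmn
        _ = r := by push_cast; rfl
    have h2 : (1/ε : ℝ) ≤ r ^ (1/p) := by
      have := Real.rpow_le_rpow (by positivity) hx (by positivity : (0:ℝ) ≤ 1/p)
      rwa [← Real.rpow_mul (by positivity : (0:ℝ) ≤ 1/ε), mul_one_div_cancel hp0,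
        Real.rpow_one] at this
    have hkey : r ≤ ε * r ^ ((p+1)/p) := by
      have hexp : (p+1)/p = 1 + 1/p := by field_simp
      rw [hexp, Real.rpow_add hr, Real.rpow_one]
      have h3 : (1:ℝ) ≤ ε * r ^ (1/p) := by
        calc (1:ℝ) = ε * (1/ε) := by field_simp
          _ ≤ ε * r ^ (1/p) := mul_le_mul_of_nonneg_left h2 hε.le
      nlinarith [Real.rpow_nonneg hr.le (1/p)]
    refine measure_mono_null ?_ (ae_iff.1 (hnormae m n hm hn))
    intro ω hω
    simp only [Set.mem_setOf_eq] at hω ⊢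
    intro heq
    rw [heq] at hω
    exact absurd hkey (not_le.2 hω)
  exact ⟨parta, hnormae, hc, partd, parte, partf⟩
end

section
/- Let V = {V_{mn}} and V' = {V'_{mn}} be two double arrays of independent random variables in a real separable Banach space (or ℝ) such that V and V' are independent copies of each other, and set S*_{mn} = ∑_{i=1}^m ∑_{j=1}^n (V_{ij} − V'_{ij}). If S*_{mn}/(m^α n^β) → 0 a.s. as m ∨ n → ∞ and S_{mn}/(m^α n^β) → 0 in probability as m ∨ n → ∞, then S_{mn}/(m^α n^β) → 0 a.s. as m ∨ n → ∞ (and conversely, a.s. convergence of S_{mn}/(m^α n^β) implies both conditions). -/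
open MeasureTheory ProbabilityTheory Finset
open scoped ENNReal

namespace Stmt13Aux

variable {E : Type*} [NormedAddCommGroup E] [MeasurableSpace E] [BorelSpace E]
  [SecondCountableTopology E]

/-- The convergence predicate. -/
def P (α β : ℝ) (g : ℕ → ℕ → E) : Prop :=
  ∀ ε > (0 : ℝ), ∃ N : ℕ, ∀ m n : ℕ, 1 ≤ m → 1 ≤ n → N ≤ max m n →
    ‖g m n‖ < ε * ((m : ℝ) ^ α * (n : ℝ) ^ β)

lemma b_nonneg (α β : ℝ) (m n : ℕ) : 0 ≤ (m : ℝ) ^ α * (n : ℝ) ^ β :=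
  mul_nonneg (Real.rpow_nonneg (Nat.cast_nonneg m) _) (Real.rpow_nonneg (Nat.cast_nonneg n) _)

lemma P_iff_countable (α β : ℝ) (g : ℕ → ℕ → E) :
    P α β g ↔ ∀ k : ℕ, ∃ N : ℕ, ∀ m n : ℕ, 1 ≤ m → 1 ≤ n → N ≤ max m n →
      ‖g m n‖ < ((k : ℝ) + 1)⁻¹ * ((m : ℝ) ^ α * (n : ℝ) ^ β) := by
  constructor
  · intro h k
    exact h ((k : ℝ) + 1)⁻¹ (by positivity)
  · intro h ε hε
    obtain ⟨k, hk⟩ := exists_nat_gt ε⁻¹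
    obtain ⟨N, hN⟩ := h k
    refine ⟨N, fun m n hm hn hmax => ?_⟩
    refine lt_of_lt_of_le (hN m n hm hn hmax) ?_
    refine mul_le_mul_of_nonneg_right ?_ (b_nonneg α β m n)
    rw [inv_le_comm₀ (by positivity) hε]
    exact le_trans hk.le (by linarith)

lemma measurableSet_and {X : Type*} [MeasurableSpace X] (p : Prop) {s : Set X}
    (hs : MeasurableSet s) : MeasurableSet {x | p ∧ x ∈ s} := by
  by_cases hp : p
  · simpa [hp] using hs
  · simp [hp]

lemma measurableSet_imp3 {X : Type*} [MeasurableSpace X] (p q r : Prop) {s : Set X}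
    (hs : MeasurableSet s) : MeasurableSet {x | p → q → r → x ∈ s} := by
  by_cases hp : p ∧ q ∧ r
  · obtain ⟨h1, h2, h3⟩ := hp
    simpa [h1, h2, h3] using hs
  · have : {x : X | p → q → r → x ∈ s} = Set.univ := by
      ext x
      simp only [Set.mem_setOf_eq, Set.mem_univ, iff_true]
      intro h1 h2 h3
      exact absurd ⟨h1, h2, h3⟩ hp
    rw [this]
    exact MeasurableSet.univ

lemma measurableSet_P {X : Type*} [MeasurableSpace X] (α β : ℝ) (f : X → ℕ → ℕ → E)
    (hf : ∀ m n, Measurable fun x => f x m n) :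
    MeasurableSet {x : X | P α β (f x)} := by
  have : {x : X | P α β (f x)} = ⋂ k : ℕ, ⋃ N : ℕ, ⋂ m : ℕ, ⋂ n : ℕ,
      {x | 1 ≤ m → 1 ≤ n → N ≤ max m n →
        x ∈ {x : X | ‖f x m n‖ < ((k : ℝ) + 1)⁻¹ * ((m : ℝ) ^ α * (n : ℝ) ^ β)}} := by
    ext x
    simp only [Set.mem_iInter, Set.mem_iUnion, Set.mem_setOf_eq]
    exact P_iff_countable α β (f x)
  rw [this]
  refine MeasurableSet.iInter fun k => MeasurableSet.iUnion fun N =>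
    MeasurableSet.iInter fun m => MeasurableSet.iInter fun n => measurableSet_imp3 _ _ _ ?_
  exact measurableSet_lt (hf m n).norm measurable_const

end Stmt13Aux

namespace Stmt13Aux

set_option linter.unusedSectionVars false

variable {E : Type*} [NormedAddCommGroup E] [MeasurableSpace E] [BorelSpace E]
  [SecondCountableTopology E]

/-- Core desymmetrization argument, in an abstract space. -/
lemma core {X : Type*} [MeasurableSpace X] (ν : Measure X) [IsProbabilityMeasure ν]
    (α β : ℝ) (T : X → ℕ → ℕ → E) (hT : ∀ m n, Measurable fun x => T x m n)
    (hdiff : ∀ᵐ x ∂ν, ∀ᵐ y ∂ν, P α β (fun m n => T x m n - T y m n))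
    (hprob : ∀ ε > (0 : ℝ), ∃ N : ℕ, ∀ m n : ℕ, 1 ≤ m → 1 ≤ n → N ≤ max m n →
      ν {y | ε * ((m : ℝ) ^ α * (n : ℝ) ^ β) < ‖T y m n‖} ≤ 2⁻¹) :
    ∀ᵐ x ∂ν, P α β (T x) := by
  filter_upwards [hdiff] with x hx
  intro ε hε
  obtain ⟨N₀, hN₀⟩ := hprob (ε / 2) (by positivity)
  by_contra hc
  push_neg at hc
  set b : ℕ → ℕ → ℝ := fun m n => (m : ℝ) ^ α * (n : ℝ) ^ β with hb
  set A : ℕ → Set X := fun N => ⋃ m : ℕ, ⋃ n : ℕ,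
    {y | (1 ≤ m ∧ 1 ≤ n ∧ max N N₀ ≤ max m n ∧ ε * b m n ≤ ‖T x m n‖) ∧
      ‖T y m n‖ ≤ ε / 2 * b m n} with hA_def
  have hA : ∀ N, MeasurableSet (A N) := by
    intro N
    refine MeasurableSet.iUnion fun m => MeasurableSet.iUnion fun n => ?_
    exact measurableSet_and _ (measurableSet_le (hT m n).norm measurable_const)
  have hC : ∀ m n : ℕ, 1 ≤ m → 1 ≤ n → N₀ ≤ max m n →
      (2⁻¹ : ℝ≥0∞) ≤ ν {y | ‖T y m n‖ ≤ ε / 2 * b m n} := by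
    intro m n hm hn hmax
    set C : Set X := {y | ‖T y m n‖ ≤ ε / 2 * b m n} with hC_def
    have hCm : MeasurableSet C := measurableSet_le (hT m n).norm measurable_const
    have hcompl : Cᶜ = {y | ε / 2 * b m n < ‖T y m n‖} := by
      ext y
      simp [hC_def, not_le]
    have h1 : ν Cᶜ ≤ 2⁻¹ := by
      rw [hcompl]
      exact hN₀ m n hm hn hmax
    have h2 : ν C = 1 - ν Cᶜ := by
      have := prob_compl_eq_one_sub (μ := ν) hCm.compl
      rwa [compl_compl] at this
    have h3 : (2⁻¹ : ℝ≥0∞) = 1 - 2⁻¹ := by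
      rw [← ENNReal.inv_two_add_inv_two, ENNReal.add_sub_cancel_right (by simp)]
    rw [h2, h3]
    exact tsub_le_tsub_left h1 1
  have hAge : ∀ N, (2⁻¹ : ℝ≥0∞) ≤ ν (A N) := by
    intro N
    obtain ⟨m, n, hm, hn, hmax, hxge⟩ := hc (max N N₀)
    refine le_trans (hC m n hm hn (le_trans (le_max_right _ _) hmax)) (measure_mono ?_)
    intro y hy
    exact Set.mem_iUnion.2 ⟨m, Set.mem_iUnion.2 ⟨n, ⟨⟨hm, hn, hmax, hxge⟩, hy⟩⟩⟩
  have hanti : Antitone A := by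
    intro N N' hNN' y hy
    simp only [hA_def, Set.mem_iUnion, Set.mem_setOf_eq] at hy ⊢
    obtain ⟨m, n, ⟨hm, hn, hmax, hxge⟩, hyle⟩ := hy
    exact ⟨m, n, ⟨hm, hn, le_trans (max_le_max hNN' le_rfl) hmax, hxge⟩, hyle⟩
  have hiInter : (2⁻¹ : ℝ≥0∞) ≤ ν (⋂ N, A N) :=
    ge_of_tendsto'
      (tendsto_measure_iInter_atTop (fun N => (hA N).nullMeasurableSet) hanti
        ⟨0, measure_ne_top _ _⟩) hAge
  have h5 : ν ((⋂ N, A N) ∩ {y | P α β (fun m n => T x m n - T y m n)}) ≠ 0 := by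
    intro h0
    have hsub : ν (⋂ N, A N) ≤
        ν ((⋂ N, A N) ∩ {y | P α β (fun m n => T x m n - T y m n)}) +
          ν {y | ¬ P α β (fun m n => T x m n - T y m n)} := by
      refine le_trans (measure_mono ?_) (measure_union_le _ _)
      intro y hy
      by_cases hp : P α β (fun m n => T x m n - T y m n)
      · exact Or.inl ⟨hy, hp⟩
      · exact Or.inr hp
    have hnull : ν {y | ¬ P α β (fun m n => T x m n - T y m n)} = 0 := by
      rw [← ae_iff]
      exact hx
    rw [h0, hnull, add_zero] at hsub
    have hcon := le_trans hiInter hsub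
    simp at hcon
  obtain ⟨y, hyA, hyP⟩ := MeasureTheory.nonempty_of_measure_ne_zero h5
  obtain ⟨N₁, hN₁⟩ := hyP (ε / 2) (by positivity)
  have hyA1 := Set.mem_iInter.1 hyA N₁
  simp only [hA_def, Set.mem_iUnion, Set.mem_setOf_eq] at hyA1
  obtain ⟨m, n, ⟨hm, hn, hmax, hxge⟩, hyle⟩ := hyA1
  have hd := hN₁ m n hm hn (le_trans (le_max_left _ _) hmax)
  have htri : ‖T x m n‖ ≤ ‖T x m n - T y m n‖ + ‖T y m n‖ := by
    simpa using norm_add_le (T x m n - T y m n) (T y m n)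
  have hring : ε / 2 * b m n + ε / 2 * b m n = ε * b m n := by ring
  simp only [hb] at hxge hyle hd
  linarith

end Stmt13Aux

namespace Stmt13Aux

set_option linter.unusedSectionVars false

variable {E : Type*} [NormedAddCommGroup E] [MeasurableSpace E] [BorelSpace E]
  [SecondCountableTopology E]
variable {Ω : Type*} [MeasurableSpace Ω] {μ : Measure Ω} [IsProbabilityMeasure μ]

/-- Finite-dimensional law of an independent family is the product of marginals. -/
lemma findim_law {ι : Type*} (f : ι → Ω → E) (hf : ∀ i, Measurable (f i))
    (hprod : ∀ (S : Finset ι) (sets : ι → Set E), (∀ i ∈ S, MeasurableSet (sets i)) →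
      μ (⋂ i ∈ S, f i ⁻¹' sets i) = ∏ i ∈ S, μ (f i ⁻¹' sets i))
    (s : Finset ι) :
    Measure.map (fun ω (i : s) => f i ω) μ =
      Measure.pi (fun i : s => Measure.map (f i) μ) := by
  classical
  haveI : ∀ i : s, IsProbabilityMeasure (Measure.map (f i) μ) :=
    fun i => Measure.isProbabilityMeasure_map (hf i).aemeasurable
  haveI : ∀ i : s, SigmaFinite (Measure.map (f i) μ) := fun i => inferInstance
  refine (Measure.pi_eq (μ := fun i : s => Measure.map (f i) μ) fun t ht => ?_).symm
  rw [Measure.map_apply (μ := μ)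
    (measurable_pi_lambda (fun ω (i : s) => f i ω) fun i => hf i)
    (MeasurableSet.univ_pi ht)]
  have hpre : (fun ω (i : s) => f i ω) ⁻¹' (Set.univ.pi t) =
      ⋂ i ∈ s, f i ⁻¹' (fun j : ι => if h : j ∈ s then t ⟨j, h⟩ else Set.univ) i := by
    ext ω
    simp only [Set.mem_preimage, Set.mem_pi, Set.mem_univ, forall_true_left, Set.mem_iInter]
    constructor
    · intro h i hi
      simp only [hi, dif_pos]
      exact h ⟨i, hi⟩
    · intro h i
      have := h i.1 i.2
      simpa only [i.2, dif_pos] using this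
  rw [hpre, hprod s _ (fun i hi => by simp only [hi, dif_pos]; exact ht ⟨i, hi⟩)]
  have hstep : ∀ i ∈ s, μ (f i ⁻¹' (fun j : ι =>
      if h : j ∈ s then t ⟨j, h⟩ else Set.univ) i) =
      (Measure.map (f i) μ) ((fun j : ι =>
        if h : j ∈ s then t ⟨j, h⟩ else Set.univ) i) := by
    intro i hi
    rw [Measure.map_apply (hf i)]
    simp only [hi, dif_pos]
    exact ht ⟨i, hi⟩
  rw [Finset.prod_congr rfl hstep]
  rw [← Finset.prod_coe_sort s (fun i => (Measure.map (f i) μ) ((fun j : ι =>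
    if h : j ∈ s then t ⟨j, h⟩ else Set.univ) i))]
  refine Finset.prod_congr rfl fun i _ => ?_
  congr 1
  simp only [i.2, dif_pos]

/-- Laws of two independent families with equal finite-dimensional laws agree as array laws. -/
lemma array_law_eq {ι : Type*} [Countable ι] (f g : ι → Ω → E)
    (hf : ∀ i, Measurable (f i)) (hg : ∀ i, Measurable (g i))
    (h : ∀ s : Finset ι, Measure.map (fun ω (i : s) => f i ω) μ =
      Measure.map (fun ω (i : s) => g i ω) μ) :
    Measure.map (fun ω (i : ι) => f i ω) μ = Measure.map (fun ω (i : ι) => g i ω) μ := by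
  have hfm : Measurable (fun ω (i : ι) => f i ω) := measurable_pi_lambda _ hf
  have hgm : Measurable (fun ω (i : ι) => g i ω) := measurable_pi_lambda _ hg
  haveI : IsProbabilityMeasure (Measure.map (fun ω (i : ι) => f i ω) μ) :=
    Measure.isProbabilityMeasure_map hfm.aemeasurable
  haveI : IsProbabilityMeasure (Measure.map (fun ω (i : ι) => g i ω) μ) :=
    Measure.isProbabilityMeasure_map hgm.aemeasurable
  refine ext_of_generate_finite _ generateFrom_measurableCylinders.symm
    isPiSystem_measurableCylinders (fun t ht => ?_) (by simp)
  obtain ⟨s, S, hS, rfl⟩ := (mem_measurableCylinders t).1 ht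
  have hmem : cylinder s S ∈ measurableCylinders (fun _ : ι => E) :=
    (mem_measurableCylinders _).2 ⟨s, S, hS, rfl⟩
  have hcylm : MeasurableSet (cylinder s S) :=
    MeasurableSet.of_mem_measurableCylinders (α := fun _ : ι => E) hmem
  rw [Measure.map_apply hfm hcylm, Measure.map_apply hgm hcylm]
  have h1 : (fun ω (i : ι) => f i ω) ⁻¹' cylinder s S = (fun ω (i : s) => f i ω) ⁻¹' S := rfl
  have h2 : (fun ω (i : ι) => g i ω) ⁻¹' cylinder s S = (fun ω (i : s) => g i ω) ⁻¹' S := rfl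
  rw [h1, h2]
  have e1 := Measure.map_apply (μ := μ)
    (measurable_pi_lambda (fun ω (i : s) => f i ω) fun i => hf i) hS
  have e2 := Measure.map_apply (μ := μ)
    (measurable_pi_lambda (fun ω (i : s) => g i ω) fun i => hg i) hS
  rw [← e1, ← e2, h s]

end Stmt13Aux

namespace Stmt13Aux

set_option linter.unusedSectionVars false

variable {E : Type*} [NormedAddCommGroup E] [MeasurableSpace E] [BorelSpace E]
  [SecondCountableTopology E]
variable {Ω : Type*} [MeasurableSpace Ω] {μ : Measure Ω} [IsProbabilityMeasure μ]
variable {V V' : ℕ → ℕ → Ω → E}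

section Arrays

variable (hmeas : ∀ m n, Measurable (V m n)) (hmeas' : ∀ m n, Measurable (V' m n))
  (hindep : iIndepFun
    (fun r : (ℕ × ℕ) × Bool => if r.2 then V r.1.1 r.1.2 else V' r.1.1 r.1.2) μ)
  (hid : ∀ m n, Measure.map (V m n) μ = Measure.map (V' m n) μ)

include hindep in
lemma prod_formula_V (S : Finset (ℕ × ℕ)) (sets : ℕ × ℕ → Set E)
    (hsets : ∀ i ∈ S, MeasurableSet (sets i)) :
    μ (⋂ i ∈ S, (fun p : ℕ × ℕ => V p.1 p.2) i ⁻¹' sets i) =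
      ∏ i ∈ S, μ ((fun p : ℕ × ℕ => V p.1 p.2) i ⁻¹' sets i) := by
  classical
  set e : (ℕ × ℕ) ↪ (ℕ × ℕ) × Bool := ⟨fun p => (p, true), fun a b h => by
    simpa using congrArg Prod.fst h⟩ with he
  have key := hindep.measure_inter_preimage_eq_mul (S.map e)
    (sets := fun r => if r.2 then sets r.1 else Set.univ) (fun r hr => by
      simp only [Finset.mem_map, he, Function.Embedding.coeFn_mk] at hr
      obtain ⟨p, hp, rfl⟩ := hr
      exact hsets p hp)
  have hl : (⋂ r ∈ S.map e, (if r.2 then V r.1.1 r.1.2 else V' r.1.1 r.1.2) ⁻¹'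
      (if r.2 then sets r.1 else Set.univ)) =
      ⋂ i ∈ S, (fun p : ℕ × ℕ => V p.1 p.2) i ⁻¹' sets i := by
    ext ω
    simp only [Set.mem_iInter, Finset.mem_map, he, Function.Embedding.coeFn_mk]
    constructor
    · intro h i hi
      have := h (i, true) ⟨i, hi, rfl⟩
      simpa using this
    · rintro h r ⟨p, hp, rfl⟩
      exact h p hp
  have hr : ∏ r ∈ S.map e, μ ((if r.2 then V r.1.1 r.1.2 else V' r.1.1 r.1.2) ⁻¹'
      (if r.2 then sets r.1 else Set.univ)) =
      ∏ i ∈ S, μ ((fun p : ℕ × ℕ => V p.1 p.2) i ⁻¹' sets i) := by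
    rw [Finset.prod_map]
    refine Finset.prod_congr rfl fun p _ => rfl
  rw [hl, hr] at key
  exact key

include hindep in
lemma prod_formula_V' (S : Finset (ℕ × ℕ)) (sets : ℕ × ℕ → Set E)
    (hsets : ∀ i ∈ S, MeasurableSet (sets i)) :
    μ (⋂ i ∈ S, (fun p : ℕ × ℕ => V' p.1 p.2) i ⁻¹' sets i) =
      ∏ i ∈ S, μ ((fun p : ℕ × ℕ => V' p.1 p.2) i ⁻¹' sets i) := by
  classical
  set e : (ℕ × ℕ) ↪ (ℕ × ℕ) × Bool := ⟨fun p => (p, false), fun a b h => by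
    simpa using congrArg Prod.fst h⟩ with he
  have key := hindep.measure_inter_preimage_eq_mul (S.map e)
    (sets := fun r => if r.2 then Set.univ else sets r.1) (fun r hr => by
      simp only [Finset.mem_map, he, Function.Embedding.coeFn_mk] at hr
      obtain ⟨p, hp, rfl⟩ := hr
      exact hsets p hp)
  have hl : (⋂ r ∈ S.map e, (if r.2 then V r.1.1 r.1.2 else V' r.1.1 r.1.2) ⁻¹'
      (if r.2 then Set.univ else sets r.1)) =
      ⋂ i ∈ S, (fun p : ℕ × ℕ => V' p.1 p.2) i ⁻¹' sets i := by
    ext ω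
    simp only [Set.mem_iInter, Finset.mem_map, he, Function.Embedding.coeFn_mk]
    constructor
    · intro h i hi
      have := h (i, false) ⟨i, hi, rfl⟩
      simpa using this
    · rintro h r ⟨p, hp, rfl⟩
      exact h p hp
  have hr : ∏ r ∈ S.map e, μ ((if r.2 then V r.1.1 r.1.2 else V' r.1.1 r.1.2) ⁻¹'
      (if r.2 then Set.univ else sets r.1)) =
      ∏ i ∈ S, μ ((fun p : ℕ × ℕ => V' p.1 p.2) i ⁻¹' sets i) := by
    rw [Finset.prod_map]
    refine Finset.prod_congr rfl fun p _ => rfl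
  rw [hl, hr] at key
  exact key

include hmeas hmeas' hindep hid in
lemma law_arr_eq :
    Measure.map (fun ω (p : ℕ × ℕ) => V p.1 p.2 ω) μ =
      Measure.map (fun ω (p : ℕ × ℕ) => V' p.1 p.2 ω) μ := by
  refine array_law_eq (fun p : ℕ × ℕ => V p.1 p.2) (fun p : ℕ × ℕ => V' p.1 p.2)
    (fun p => hmeas p.1 p.2) (fun p => hmeas' p.1 p.2) (fun s => ?_)
  rw [findim_law (fun p : ℕ × ℕ => V p.1 p.2) (fun p => hmeas p.1 p.2)
      (prod_formula_V hindep) s,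
    findim_law (fun p : ℕ × ℕ => V' p.1 p.2) (fun p => hmeas' p.1 p.2)
      (prod_formula_V' hindep) s]
  congr 1
  funext i
  exact hid i.1.1 i.1.2

include hmeas hmeas' hindep in
lemma arrays_indepFun :
    IndepFun (fun ω (p : ℕ × ℕ) => V p.1 p.2 ω) (fun ω (p : ℕ × ℕ) => V' p.1 p.2 ω) μ := by
  rw [IndepFun_iff_Indep]
  have hFmeas : ∀ r : (ℕ × ℕ) × Bool,
      Measurable (if r.2 then V r.1.1 r.1.2 else V' r.1.1 r.1.2) := by
    rintro ⟨p, b⟩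
    cases b
    · simpa using hmeas' p.1 p.2
    · simpa using hmeas p.1 p.2
  have h_le : ∀ r : (ℕ × ℕ) × Bool,
      MeasurableSpace.comap (if r.2 then V r.1.1 r.1.2 else V' r.1.1 r.1.2)
        (inferInstance : MeasurableSpace E) ≤ _ := fun r => (hFmeas r).comap_le
  have h := indep_biSup_compl h_le hindep.iIndep {r : (ℕ × ℕ) × Bool | r.2 = true}
  have hcomap : ∀ (W : ℕ → ℕ → Ω → E),
      MeasurableSpace.comap (fun ω (p : ℕ × ℕ) => W p.1 p.2 ω)
        (MeasurableSpace.pi (X := fun _ : ℕ × ℕ => E)) =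
        ⨆ p : ℕ × ℕ, MeasurableSpace.comap (W p.1 p.2)
          (inferInstance : MeasurableSpace E) := by
    intro W
    rw [MeasurableSpace.pi.eq_1, MeasurableSpace.comap_iSup]
    congr 1
    funext p
    rw [MeasurableSpace.comap_comp]
    rfl
  refine indep_of_indep_of_le_left (indep_of_indep_of_le_right h ?_) ?_
  · -- comap arrV' ≤ ⨆ r ∈ {r | r.2 = true}ᶜ
    rw [hcomap V']
    refine iSup_le fun p => ?_
    have : MeasurableSpace.comap (V' p.1 p.2) (inferInstance : MeasurableSpace E) =
        MeasurableSpace.comap (if (p, false).2 then V (p, false).1.1 (p, false).1.2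
          else V' (p, false).1.1 (p, false).1.2) (inferInstance : MeasurableSpace E) := by
      norm_num
    rw [this]
    exact le_biSup
      (fun r : (ℕ × ℕ) × Bool => MeasurableSpace.comap
        (if r.2 then V r.1.1 r.1.2 else V' r.1.1 r.1.2)
        (inferInstance : MeasurableSpace E))
      (show (p, false) ∈ {r : (ℕ × ℕ) × Bool | r.2 = true}ᶜ by simp)
  · rw [hcomap V]
    refine iSup_le fun p => ?_
    have : MeasurableSpace.comap (V p.1 p.2) (inferInstance : MeasurableSpace E) =
        MeasurableSpace.comap (if (p, true).2 then V (p, true).1.1 (p, true).1.2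
          else V' (p, true).1.1 (p, true).1.2) (inferInstance : MeasurableSpace E) := by
      norm_num
    rw [this]
    exact le_biSup
      (fun r : (ℕ × ℕ) × Bool => MeasurableSpace.comap
        (if r.2 then V r.1.1 r.1.2 else V' r.1.1 r.1.2)
        (inferInstance : MeasurableSpace E))
      (show (p, true) ∈ {r : (ℕ × ℕ) × Bool | r.2 = true} by simp)

end Arrays

end Stmt13Aux
open MeasureTheory ProbabilityTheory Finset
open scoped ENNReal

set_option maxHeartbeats 1000000 in
theorem stmt13
    {Ω : Type*} [MeasurableSpace Ω] (μ : Measure Ω) [IsProbabilityMeasure μ]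
    {E : Type*} [NormedAddCommGroup E] [MeasurableSpace E] [BorelSpace E]
    [SecondCountableTopology E]
    (α β : ℝ) (hα : 0 < α) (hβ : 0 < β)
    (V V' : ℕ → ℕ → Ω → E)
    (hmeas : ∀ m n, Measurable (V m n)) (hmeas' : ∀ m n, Measurable (V' m n))
    (hindep : iIndepFun
      (fun r : (ℕ × ℕ) × Bool => if r.2 then V r.1.1 r.1.2 else V' r.1.1 r.1.2) μ)
    (hid : ∀ m n, Measure.map (V m n) μ = Measure.map (V' m n) μ) :
    (∀ᵐ ω ∂μ, ∀ ε > (0 : ℝ), ∃ N : ℕ, ∀ m n : ℕ, 1 ≤ m → 1 ≤ n → N ≤ max m n →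
        ‖∑ i ∈ Finset.Icc 1 m, ∑ j ∈ Finset.Icc 1 n, V i j ω‖ <
          ε * ((m : ℝ) ^ α * (n : ℝ) ^ β))
    ↔
    ((∀ᵐ ω ∂μ, ∀ ε > (0 : ℝ), ∃ N : ℕ, ∀ m n : ℕ, 1 ≤ m → 1 ≤ n → N ≤ max m n →
        ‖∑ i ∈ Finset.Icc 1 m, ∑ j ∈ Finset.Icc 1 n, (V i j ω - V' i j ω)‖ <
          ε * ((m : ℝ) ^ α * (n : ℝ) ^ β)) ∧
      (∀ ε > (0 : ℝ), ∀ δ > (0 : ℝ), ∃ N : ℕ, ∀ m n : ℕ, 1 ≤ m → 1 ≤ n → N ≤ max m n →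
        (μ {ω | ε * ((m : ℝ) ^ α * (n : ℝ) ^ β) <
          ‖∑ i ∈ Finset.Icc 1 m, ∑ j ∈ Finset.Icc 1 n, V i j ω‖}).toReal < δ)) := by
  classical
  set T : ((ℕ × ℕ) → E) → ℕ → ℕ → E :=
    fun x m n => ∑ i ∈ Finset.Icc 1 m, ∑ j ∈ Finset.Icc 1 n, x (i, j) with hTdef
  have hTmeas : ∀ m n, Measurable fun x => T x m n := fun m n =>
    Finset.measurable_sum _ fun i _ => Finset.measurable_sum _ fun j _ =>
      measurable_pi_apply _
  have harr : Measurable (fun ω (p : ℕ × ℕ) => V p.1 p.2 ω) :=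
    measurable_pi_lambda _ fun p => hmeas p.1 p.2
  have harr' : Measurable (fun ω (p : ℕ × ℕ) => V' p.1 p.2 ω) :=
    measurable_pi_lambda _ fun p => hmeas' p.1 p.2
  set ν : Measure ((ℕ × ℕ) → E) := Measure.map (fun ω (p : ℕ × ℕ) => V p.1 p.2 ω) μ with hν
  haveI : IsProbabilityMeasure ν := Measure.isProbabilityMeasure_map harr.aemeasurable
  have hlaw : ν = Measure.map (fun ω (p : ℕ × ℕ) => V' p.1 p.2 ω) μ :=
    Stmt13Aux.law_arr_eq hmeas hmeas' hindep hid
  have hPmeas : MeasurableSet {x : (ℕ × ℕ) → E | Stmt13Aux.P α β (T x)} :=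
    Stmt13Aux.measurableSet_P α β T hTmeas
  have hSmeas : ∀ m n : ℕ, Measurable fun ω =>
      ∑ i ∈ Finset.Icc 1 m, ∑ j ∈ Finset.Icc 1 n, V i j ω := fun m n =>
    Finset.measurable_sum _ fun i _ => Finset.measurable_sum _ fun j _ => hmeas i j
  have hsum_sub : ∀ ω (m n : ℕ),
      ∑ i ∈ Finset.Icc 1 m, ∑ j ∈ Finset.Icc 1 n, (V i j ω - V' i j ω) =
        (∑ i ∈ Finset.Icc 1 m, ∑ j ∈ Finset.Icc 1 n, V i j ω) -
          ∑ i ∈ Finset.Icc 1 m, ∑ j ∈ Finset.Icc 1 n, V' i j ω := by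
    intro ω m n
    rw [← Finset.sum_sub_distrib]
    exact Finset.sum_congr rfl fun i _ => by rw [← Finset.sum_sub_distrib]
  constructor
  · -- forward direction
    intro h
    have hμP : ∀ᵐ ω ∂μ, Stmt13Aux.P α β (T ((fun ω (p : ℕ × ℕ) => V p.1 p.2 ω) ω)) := h
    have hνP : ∀ᵐ x ∂ν, Stmt13Aux.P α β (T x) :=
      (MeasureTheory.ae_map_iff harr.aemeasurable hPmeas).2 hμP
    have hν'P : ∀ᵐ x ∂(Measure.map (fun ω (p : ℕ × ℕ) => V' p.1 p.2 ω) μ),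
        Stmt13Aux.P α β (T x) := hlaw ▸ hνP
    have h' : ∀ᵐ ω ∂μ, Stmt13Aux.P α β (T ((fun ω (p : ℕ × ℕ) => V' p.1 p.2 ω) ω)) :=
      (MeasureTheory.ae_map_iff harr'.aemeasurable hPmeas).1 hν'P
    constructor
    · filter_upwards [h, h'] with ω h1 h2
      intro ε hε
      obtain ⟨N1, hN1⟩ := h1 (ε / 2) (by positivity)
      obtain ⟨N2, hN2⟩ := h2 (ε / 2) (by positivity)
      refine ⟨max N1 N2, fun m n hm hn hN => ?_⟩
      rw [hsum_sub ω m n]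
      have b1 := hN1 m n hm hn (le_trans (le_max_left _ _) hN)
      have b2 := hN2 m n hm hn (le_trans (le_max_right _ _) hN)
      have htri := norm_sub_le (∑ i ∈ Finset.Icc 1 m, ∑ j ∈ Finset.Icc 1 n, V i j ω)
        (∑ i ∈ Finset.Icc 1 m, ∑ j ∈ Finset.Icc 1 n, V' i j ω)
      have hring : ε / 2 * ((m : ℝ) ^ α * (n : ℝ) ^ β) +
          ε / 2 * ((m : ℝ) ^ α * (n : ℝ) ^ β) = ε * ((m : ℝ) ^ α * (n : ℝ) ^ β) := by ring
      linarith
    · intro ε hε δ hδ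
      set G : ℕ → Set Ω := fun N => ⋂ m : ℕ, ⋂ n : ℕ,
        {ω | 1 ≤ m → 1 ≤ n → N ≤ max m n →
          ω ∈ {ω | ‖∑ i ∈ Finset.Icc 1 m, ∑ j ∈ Finset.Icc 1 n, V i j ω‖ <
            ε * ((m : ℝ) ^ α * (n : ℝ) ^ β)}} with hGdef
      have hGm : ∀ N, MeasurableSet (G N) := fun N =>
        MeasurableSet.iInter fun m => MeasurableSet.iInter fun n =>
          Stmt13Aux.measurableSet_imp3 _ _ _
            (measurableSet_lt (hSmeas m n).norm measurable_const)
      have hGmono : Monotone G := by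
        intro N N' hNN' ω hω
        simp only [hGdef, Set.mem_iInter, Set.mem_setOf_eq] at hω ⊢
        intro m n hm hn hmax
        exact hω m n hm hn (le_trans hNN' hmax)
      have hcov : ∀ᵐ ω ∂μ, ω ∈ ⋃ N, G N := by
        filter_upwards [h] with ω hω
        obtain ⟨N, hN⟩ := hω ε hε
        refine Set.mem_iUnion.2 ⟨N, ?_⟩
        simp only [hGdef, Set.mem_iInter, Set.mem_setOf_eq]
        exact hN
      have hval : μ (⋃ N, G N) = 1 := by
        have := measure_congr (Filter.eventuallyEq_univ.2 hcov)
        rwa [measure_univ] at this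
      have htend : Filter.Tendsto (fun N => μ (G N)) Filter.atTop (nhds 1) := by
        have := tendsto_measure_iUnion_atTop (μ := μ) hGmono
        rwa [hval] at this
      have htendc : Filter.Tendsto (fun N => μ (G N)ᶜ) Filter.atTop (nhds 0) := by
        have heq : ∀ N, μ (G N)ᶜ = 1 - μ (G N) := fun N => prob_compl_eq_one_sub (hGm N)
        simp only [heq]
        have := ENNReal.Tendsto.sub (tendsto_const_nhds (x := (1 : ℝ≥0∞))
          (f := Filter.atTop)) htend (Or.inl ENNReal.one_ne_top)
        simpa using this
      have hev : ∀ᶠ N in Filter.atTop, μ (G N)ᶜ < ENNReal.ofReal δ :=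
        htendc.eventually_lt_const (by simpa using hδ)
      obtain ⟨N, hN⟩ := hev.exists
      refine ⟨N, fun m n hm hn hmax => ?_⟩
      have hsub : {ω | ε * ((m : ℝ) ^ α * (n : ℝ) ^ β) <
          ‖∑ i ∈ Finset.Icc 1 m, ∑ j ∈ Finset.Icc 1 n, V i j ω‖} ⊆ (G N)ᶜ := by
        intro ω hω hG
        simp only [hGdef, Set.mem_iInter, Set.mem_setOf_eq] at hG
        have := hG m n hm hn hmax
        simp only [Set.mem_setOf_eq] at hω
        exact absurd hω (not_lt.2 this.le)
      calc (μ {ω | ε * ((m : ℝ) ^ α * (n : ℝ) ^ β) <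
            ‖∑ i ∈ Finset.Icc 1 m, ∑ j ∈ Finset.Icc 1 n, V i j ω‖}).toReal
          ≤ (μ (G N)ᶜ).toReal :=
            ENNReal.toReal_mono (measure_ne_top _ _) (measure_mono hsub)
        _ < δ := ENNReal.toReal_lt_of_lt_ofReal hN
  · -- backward direction
    rintro ⟨hstar, hprob⟩
    have hstar' : ∀ᵐ ω ∂μ, Stmt13Aux.P α β
        (fun m n => T ((fun ω (p : ℕ × ℕ) => V p.1 p.2 ω) ω) m n -
          T ((fun ω (p : ℕ × ℕ) => V' p.1 p.2 ω) ω) m n) := by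
      filter_upwards [hstar] with ω hω
      intro ε hε
      obtain ⟨N, hN⟩ := hω ε hε
      refine ⟨N, fun m n hm hn hmax => ?_⟩
      have := hN m n hm hn hmax
      rwa [hsum_sub ω m n] at this
    have hQmeas : MeasurableSet {z : ((ℕ × ℕ) → E) × ((ℕ × ℕ) → E) |
        Stmt13Aux.P α β (fun m n => T z.1 m n - T z.2 m n)} := by
      refine Stmt13Aux.measurableSet_P α β
        (fun z : ((ℕ × ℕ) → E) × ((ℕ × ℕ) → E) => fun m n => T z.1 m n - T z.2 m n) ?_
      intro m n
      exact ((hTmeas m n).comp measurable_fst).sub ((hTmeas m n).comp measurable_snd)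
    have hpairmeas : Measurable fun ω =>
        ((fun ω (p : ℕ × ℕ) => V p.1 p.2 ω) ω, (fun ω (p : ℕ × ℕ) => V' p.1 p.2 ω) ω) :=
      harr.prodMk harr'
    have hmap : Measure.map (fun ω =>
        ((fun ω (p : ℕ × ℕ) => V p.1 p.2 ω) ω, (fun ω (p : ℕ × ℕ) => V' p.1 p.2 ω) ω)) μ =
        ν.prod ν := by
      rw [(indepFun_iff_map_prod_eq_prod_map_map harr.aemeasurable harr'.aemeasurable).1
        (Stmt13Aux.arrays_indepFun hmeas hmeas' hindep), ← hlaw, ← hν]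
    have hQ : ∀ᵐ z ∂(ν.prod ν), Stmt13Aux.P α β (fun m n => T z.1 m n - T z.2 m n) := by
      rw [← hmap, MeasureTheory.ae_map_iff hpairmeas.aemeasurable hQmeas]
      exact hstar'
    have hdiff : ∀ᵐ x ∂ν, ∀ᵐ y ∂ν, Stmt13Aux.P α β (fun m n => T x m n - T y m n) :=
      MeasureTheory.Measure.ae_ae_of_ae_prod hQ
    have hprobν : ∀ ε > (0 : ℝ), ∃ N : ℕ, ∀ m n : ℕ, 1 ≤ m → 1 ≤ n → N ≤ max m n →
        ν {y | ε * ((m : ℝ) ^ α * (n : ℝ) ^ β) < ‖T y m n‖} ≤ 2⁻¹ := by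
      intro ε hε
      obtain ⟨N, hN⟩ := hprob ε hε (1 / 2) (by norm_num)
      refine ⟨N, fun m n hm hn hmax => ?_⟩
      have heq : ν {y | ε * ((m : ℝ) ^ α * (n : ℝ) ^ β) < ‖T y m n‖} =
          μ {ω | ε * ((m : ℝ) ^ α * (n : ℝ) ^ β) <
            ‖∑ i ∈ Finset.Icc 1 m, ∑ j ∈ Finset.Icc 1 n, V i j ω‖} := by
        rw [hν, Measure.map_apply harr (measurableSet_lt measurable_const (hTmeas m n).norm)]
        rfl
      rw [heq]
      have hlt := hN m n hm hn hmax
      have hne : μ {ω | ε * ((m : ℝ) ^ α * (n : ℝ) ^ β) <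
          ‖∑ i ∈ Finset.Icc 1 m, ∑ j ∈ Finset.Icc 1 n, V i j ω‖} ≠ ⊤ := measure_ne_top _ _
      have h2 : (2⁻¹ : ℝ≥0∞) = ENNReal.ofReal (1 / 2) := by
        rw [ENNReal.ofReal_div_of_pos (by norm_num)]
        norm_num
      rw [h2, ← ENNReal.ofReal_toReal hne]
      exact ENNReal.ofReal_le_ofReal hlt.le
    have hcore := Stmt13Aux.core ν α β T hTmeas hdiff hprobν
    exact (MeasureTheory.ae_map_iff harr.aemeasurable hPmeas).1 hcore
end

section
/- Let p ≥ 1 and let {V_{mn}} be a double array of independent real-valued random variables with ∑_{m,n} E|S_{mn}|^p/(mn)^{p+1} < ∞, where S_{mn} = ∑_{i≤m} ∑_{j≤n} V_{ij}. Then S_{mn}/(mn) → 0 in probability as m ∨ n → ∞: for every ε > 0, P(|S_{mn}| > ε mn) → 0 as max(m,n) → ∞. -/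
open MeasureTheory ProbabilityTheory Finset

lemma aux_convexOn (p : ℝ) (hp : 1 ≤ p) (x : ℝ) :
    ConvexOn ℝ Set.univ (fun t : ℝ => |x + t| ^ p) := by
  have hp0 : (0:ℝ) ≤ p := le_trans zero_le_one hp
  refine ⟨convex_univ, fun a _ b _ s t hs ht hst => ?_⟩
  simp only [smul_eq_mul]
  have h1 : |x + (s * a + t * b)| ≤ s * |x + a| + t * |x + b| := by
    have he : x + (s * a + t * b) = s * (x + a) + t * (x + b) := by linear_combination (-x) * hst
    rw [he]
    calc |s * (x + a) + t * (x + b)| ≤ |s * (x + a)| + |t * (x + b)| := abs_add_le _ _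
      _ = s * |x + a| + t * |x + b| := by
          rw [abs_mul, abs_mul, abs_of_nonneg hs, abs_of_nonneg ht]
  have h2 := (convexOn_rpow hp).2 (Set.mem_Ici.2 (abs_nonneg (x + a)))
    (Set.mem_Ici.2 (abs_nonneg (x + b))) hs ht hst
  simp only [smul_eq_mul] at h2
  calc |x + (s * a + t * b)| ^ p ≤ (s * |x + a| + t * |x + b|) ^ p :=
        Real.rpow_le_rpow (abs_nonneg _) h1 hp0
    _ ≤ s * |x + a| ^ p + t * |x + b| ^ p := h2

lemma aux_jensen {Ω : Type*} [MeasurableSpace Ω] (μ : Measure Ω) [IsProbabilityMeasure μ]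
    (p : ℝ) (hp : 1 ≤ p) (X Y : Ω → ℝ) (hXm : Measurable X) (hYm : Measurable Y)
    (hind : IndepFun X Y μ) (hYint : Integrable Y μ) (hY0 : ∫ ω, Y ω ∂μ = 0)
    (hX : MemLp X (ENNReal.ofReal p) μ) (hY : MemLp Y (ENNReal.ofReal p) μ) :
    ∫ ω, |X ω| ^ p ∂μ ≤ ∫ ω, |X ω + Y ω| ^ p ∂μ := by
  have hp0 : (0:ℝ) < p := lt_of_lt_of_le zero_lt_one hp
  set pE := ENNReal.ofReal p with hpE
  have hpE0 : pE ≠ 0 := by simp [hpE, ENNReal.ofReal_eq_zero]; linarith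
  have hpEtop : pE ≠ ⊤ := ENNReal.ofReal_ne_top
  have htoReal : pE.toReal = p := ENNReal.toReal_ofReal hp0.le
  have hXYint : Integrable (fun ω => |X ω + Y ω| ^ p) μ := by
    have h := (hX.add hY).integrable_norm_rpow hpE0 hpEtop
    simpa [Real.norm_eq_abs, htoReal] using h
  have hXint' : Integrable (fun ω => |X ω| ^ p) μ := by
    simpa [Real.norm_eq_abs, htoReal] using hX.integrable_norm_rpow hpE0 hpEtop
  set ν₁ := μ.map X with hν₁
  set ν₂ := μ.map Y with hν₂
  haveI : IsProbabilityMeasure ν₁ := Measure.isProbabilityMeasure_map hXm.aemeasurable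
  haveI : IsProbabilityMeasure ν₂ := Measure.isProbabilityMeasure_map hYm.aemeasurable
  have hmap : μ.map (fun ω => (X ω, Y ω)) = ν₁.prod ν₂ :=
    (indepFun_iff_map_prod_eq_prod_map_map hXm.aemeasurable hYm.aemeasurable).mp hind
  have hGcont : Continuous (fun z : ℝ × ℝ => |z.1 + z.2| ^ p) :=
    ((continuous_fst.add continuous_snd).abs).rpow_const (fun _ => Or.inr hp0.le)
  have hGint : Integrable (fun z : ℝ × ℝ => |z.1 + z.2| ^ p) (ν₁.prod ν₂) := by
    rw [← hmap, integrable_map_measure hGcont.aestronglyMeasurable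
      (hXm.prodMk hYm).aemeasurable]
    exact hXYint
  have step1 : ∫ ω, |X ω + Y ω| ^ p ∂μ = ∫ x, ∫ y, |x + y| ^ p ∂ν₂ ∂ν₁ := by
    rw [← MeasureTheory.integral_prod _ hGint, ← hmap,
      integral_map (hXm.prodMk hYm).aemeasurable hGcont.aestronglyMeasurable]
  have hYν : ∫ y, y ∂ν₂ = 0 := by
    have h := integral_map (f := id) (μ := μ) hYm.aemeasurable aestronglyMeasurable_id
    simpa [hY0] using h
  have hYνint : Integrable (fun y : ℝ => y) ν₂ := by
    have h : Integrable id (μ.map Y) :=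
      (integrable_map_measure aestronglyMeasurable_id hYm.aemeasurable).mpr
        (by simpa [Function.comp] using hYint)
    exact h
  have key : ∀ᵐ x ∂ν₁, |x| ^ p ≤ ∫ y, |x + y| ^ p ∂ν₂ := by
    filter_upwards [hGint.prod_right_ae] with x hx
    have hf : Integrable (fun y : ℝ => x + y) ν₂ := (integrable_const x).add hYνint
    have hjensen := (aux_convexOn p hp x).map_integral_le
      (Continuous.continuousOn (((continuous_const.add continuous_id).abs).rpow_const (fun _ => Or.inr hp0.le)))
      isClosed_univ (Filter.Eventually.of_forall fun y => Set.mem_univ y)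
      hYνint (by exact hx)
    rw [hYν] at hjensen
    simpa using hjensen
  have hXν₁int : Integrable (fun x : ℝ => |x| ^ p) ν₁ := by
    rw [hν₁, integrable_map_measure
      (continuous_abs.rpow_const (fun _ => Or.inr hp0.le)).aestronglyMeasurable
      hXm.aemeasurable]
    exact hXint'
  calc ∫ ω, |X ω| ^ p ∂μ = ∫ x, |x| ^ p ∂ν₁ := by
        rw [hν₁, integral_map hXm.aemeasurable
          (continuous_abs.rpow_const (fun _ => Or.inr hp0.le)).aestronglyMeasurable]
    _ ≤ ∫ x, ∫ y, |x + y| ^ p ∂ν₂ ∂ν₁ :=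
        integral_mono_ae hXν₁int hGint.integral_prod_left key
    _ = ∫ ω, |X ω + Y ω| ^ p ∂μ := step1.symm

theorem stmt15
    {Ω : Type*} [MeasurableSpace Ω] (μ : Measure Ω) [IsProbabilityMeasure μ]
    (V : ℕ → ℕ → Ω → ℝ) (p : ℝ) (hp : 1 ≤ p)
    (hindep : iIndepFun (fun q : ℕ × ℕ => V q.1 q.2) μ)
    (hint : ∀ m n, Integrable (V m n) μ)
    (hmean : ∀ m n, ∫ ω, V m n ω ∂μ = 0)
    (hmom : ∀ m n : ℕ, Integrable (fun ω => |V m n ω| ^ p) μ)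
    (hsum : Summable (fun q : ℕ × ℕ =>
      (∫ ω, |∑ i ∈ Finset.Icc 1 (q.1 + 1), ∑ j ∈ Finset.Icc 1 (q.2 + 1), V i j ω| ^ p ∂μ) /
        (((q.1 + 1 : ℕ) : ℝ) * ((q.2 + 1 : ℕ) : ℝ)) ^ (p + 1))) :
    ∀ ε > (0 : ℝ), ∀ δ > (0 : ℝ), ∃ N : ℕ, ∀ m n : ℕ, 1 ≤ m → 1 ≤ n → N ≤ max m n →
      (μ {ω | ε * ((m : ℝ) * n) <
        |∑ i ∈ Finset.Icc 1 m, ∑ j ∈ Finset.Icc 1 n, V i j ω|}).toReal < δ := by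
  classical
  have hp0 : (0:ℝ) < p := lt_of_lt_of_le zero_lt_one hp
  set pE := ENNReal.ofReal p with hpE
  have hpE0 : pE ≠ 0 := by simp [hpE, ENNReal.ofReal_eq_zero]; linarith
  have hpEtop : pE ≠ ⊤ := ENNReal.ofReal_ne_top
  have htoReal : pE.toReal = p := ENNReal.toReal_ofReal hp0.le
  -- measurable modifications
  set W : ℕ → ℕ → Ω → ℝ := fun m n => (hint m n).1.mk (V m n) with hWdef
  have hWm : ∀ m n, Measurable (W m n) := fun m n =>
    (hint m n).1.stronglyMeasurable_mk.measurable
  have hWae : ∀ m n, V m n =ᵐ[μ] W m n := fun m n => (hint m n).1.ae_eq_mk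
  have hindepW : iIndepFun
      (fun q : ℕ × ℕ => W q.1 q.2) μ := by
    rw [iIndepFun_iff_measure_inter_preimage_eq_mul] at hindep ⊢
    intro S sets hsets
    have hae : ∀ᵐ ω ∂μ, ∀ q ∈ S, V q.1 q.2 ω = W q.1 q.2 ω :=
      (ae_ball_iff S.countable_toSet).2 fun q _ => hWae q.1 q.2
    have h1 : (⋂ q ∈ S, (fun ω => W q.1 q.2 ω) ⁻¹' sets q)
        =ᵐ[μ] (⋂ q ∈ S, (fun ω => V q.1 q.2 ω) ⁻¹' sets q) := by
      rw [Filter.eventuallyEq_set]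
      filter_upwards [hae] with ω hω
      simp only [Set.mem_iInter, Set.mem_preimage]
      exact ⟨fun h q hq => by rw [hω q hq]; exact h q hq,
             fun h q hq => by rw [← hω q hq]; exact h q hq⟩
    have h2 : ∀ q ∈ S, μ ((fun ω => W q.1 q.2 ω) ⁻¹' sets q)
        = μ ((fun ω => V q.1 q.2 ω) ⁻¹' sets q) := by
      intro q _
      apply measure_congr
      rw [Filter.eventuallyEq_set]
      filter_upwards [hWae q.1 q.2] with ω hω
      simp only [Set.mem_preimage]
      rw [hω]
    rw [measure_congr h1, hindep S hsets]
    exact (Finset.prod_congr rfl fun q hq => (h2 q hq).symm)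
  -- partial sums of the measurable versions
  set SW : Finset (ℕ × ℕ) → Ω → ℝ := fun F ω => ∑ q ∈ F, W q.1 q.2 ω with hSWdef
  have hSWm : ∀ F, Measurable (SW F) := fun F =>
    Finset.measurable_sum F fun q _ => hWm q.1 q.2
  have hWint : ∀ m n, Integrable (W m n) μ := fun m n => (hint m n).congr (hWae m n)
  have hSWint : ∀ F, Integrable (SW F) μ := fun F =>
    integrable_finset_sum F fun q _ => hWint q.1 q.2
  have hWmean : ∀ m n, ∫ ω, W m n ω ∂μ = 0 := fun m n => by
    rw [← integral_congr_ae (hWae m n)]; exact hmean m n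
  have hSWmean : ∀ F, ∫ ω, SW F ω ∂μ = 0 := fun F => by
    rw [hSWdef]
    simp only
    rw [integral_finset_sum F fun q _ => hWint q.1 q.2]
    exact Finset.sum_eq_zero fun q _ => hWmean q.1 q.2
  have hWmem : ∀ m n, MemLp (W m n) pE μ := by
    intro m n
    have h1 : Integrable (fun ω => |W m n ω| ^ p) μ :=
      (hmom m n).congr (by filter_upwards [hWae m n] with ω hω; rw [hω])
    have h2 : MemLp (fun ω => ‖W m n ω‖ ^ pE.toReal) (pE / pE) μ := by
      rw [ENNReal.div_self hpE0 hpEtop, memLp_one_iff_integrable]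
      simpa [Real.norm_eq_abs, htoReal] using h1
    exact (memLp_norm_rpow_iff (hWm m n).aestronglyMeasurable hpE0 hpEtop).1 h2
  have hSWmem : ∀ F, MemLp (SW F) pE μ := fun F =>
    memLp_finset_sum F fun q _ => hWmem q.1 q.2
  set I : Finset (ℕ × ℕ) → ℝ := fun F => ∫ ω, |SW F ω| ^ p ∂μ with hIdef
  have hInn : ∀ F, 0 ≤ I F := fun F =>
    integral_nonneg fun ω => Real.rpow_nonneg (abs_nonneg _) p
  have hIint : ∀ F, Integrable (fun ω => |SW F ω| ^ p) μ := fun F => by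
    simpa [Real.norm_eq_abs, htoReal] using (hSWmem F).integrable_norm_rpow hpE0 hpEtop
  -- monotonicity of I
  have hmono : ∀ F G : Finset (ℕ × ℕ), F ⊆ G → I F ≤ I G := by
    intro F G hFG
    have hdisj : Disjoint F (G \ F) := Finset.disjoint_sdiff
    have hXYeq : ∀ ω, SW G ω = SW F ω + SW (G \ F) ω := fun ω => by
      rw [hSWdef]
      simp only
      rw [← Finset.sum_sdiff hFG]
      ring
    have hind2 : IndepFun (SW F) (SW (G \ F)) μ := by
      have h := hindepW.indepFun_finset F (G \ F) hdisj (fun q => hWm q.1 q.2)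
      have hφ : Measurable (fun v : ↥F → ℝ => ∑ i, v i) :=
        Finset.measurable_sum Finset.univ fun i _ => measurable_pi_apply i
      have hψ : Measurable (fun v : ↥(G \ F) → ℝ => ∑ i, v i) :=
        Finset.measurable_sum Finset.univ fun i _ => measurable_pi_apply i
      have hc := h.comp hφ hψ
      have e1 : ((fun v : ↥F → ℝ => ∑ i, v i)
          ∘ (fun a (i : ↥F) => W (i : ℕ × ℕ).1 (i : ℕ × ℕ).2 a)) = SW F := by
        funext a
        simp only [Function.comp]
        rw [Finset.sum_coe_sort F (fun q => W q.1 q.2 a)]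
      have e2 : ((fun v : ↥(G \ F) → ℝ => ∑ i, v i)
          ∘ (fun a (i : ↥(G \ F)) => W (i : ℕ × ℕ).1 (i : ℕ × ℕ).2 a))
          = SW (G \ F) := by
        funext a
        simp only [Function.comp]
        rw [Finset.sum_coe_sort (G \ F) (fun q => W q.1 q.2 a)]
      rwa [e1, e2] at hc
    have hj := aux_jensen μ p hp (SW F) (SW (G \ F)) (hSWm F) (hSWm _) hind2
      (hSWint _) (hSWmean _) (hSWmem F) (hSWmem _)
    calc I F ≤ ∫ ω, |SW F ω + SW (G \ F) ω| ^ p ∂μ := hj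
      _ = I G := integral_congr_ae (Filter.Eventually.of_forall fun ω => by
          show |SW F ω + SW (G \ F) ω| ^ p = |SW G ω| ^ p
          rw [hXYeq ω])
  -- relating the statement's sums with SW
  have hbox : ∀ m n : ℕ, ∀ᵐ ω ∂μ,
      ∑ i ∈ Finset.Icc 1 m, ∑ j ∈ Finset.Icc 1 n, V i j ω
        = SW (Finset.Icc 1 m ×ˢ Finset.Icc 1 n) ω := by
    intro m n
    have hae : ∀ᵐ ω ∂μ, ∀ q ∈ Finset.Icc 1 m ×ˢ Finset.Icc 1 n,
        V q.1 q.2 ω = W q.1 q.2 ω :=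
      (ae_ball_iff (Finset.Icc 1 m ×ˢ Finset.Icc 1 n).countable_toSet).2
        fun q _ => hWae q.1 q.2
    filter_upwards [hae] with ω hω
    rw [← Finset.sum_product']
    exact Finset.sum_congr rfl hω
  set a : ℕ × ℕ → ℝ := fun q =>
    I (Finset.Icc 1 (q.1 + 1) ×ˢ Finset.Icc 1 (q.2 + 1)) /
      (((q.1 + 1 : ℕ) : ℝ) * ((q.2 + 1 : ℕ) : ℝ)) ^ (p + 1) with hadef
  have hsum' : Summable a := by
    refine hsum.congr fun q => ?_
    rw [hadef]
    simp only
    congr 1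
    exact integral_congr_ae
      (by filter_upwards [hbox (q.1 + 1) (q.2 + 1)] with ω hω; rw [hω])
  have hann : ∀ q, 0 ≤ a q := fun q =>
    div_nonneg (hInn _) (Real.rpow_nonneg (by positivity) _)
  -- core estimate
  have hcore : ∀ m n : ℕ, 1 ≤ m → 1 ≤ n →
      I (Finset.Icc 1 m ×ˢ Finset.Icc 1 n) ≤ (4:ℝ) ^ (p+1) * ((m:ℝ) * n) ^ p *
        ∑ q ∈ Finset.Icc (m-1) (2*m-2) ×ˢ Finset.Icc (n-1) (2*n-2), a q := by
    intro m n hm hn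
    have hm' : (0:ℝ) < m := by exact_mod_cast hm
    have hn' : (0:ℝ) < n := by exact_mod_cast hn
    have hc0 : (0:ℝ) < (m:ℝ) * n := mul_pos hm' hn'
    have hcard : (Finset.Icc (m-1) (2*m-2) ×ˢ Finset.Icc (n-1) (2*n-2)).card = m * n := by
      have e1 : 2*m-2+1-(m-1) = m := by omega
      have e2 : 2*n-2+1-(n-1) = n := by omega
      rw [Finset.card_product, Nat.card_Icc, Nat.card_Icc, e1, e2]
    have hkey : ∀ q ∈ Finset.Icc (m-1) (2*m-2) ×ˢ Finset.Icc (n-1) (2*n-2),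
        I (Finset.Icc 1 m ×ˢ Finset.Icc 1 n) / ((4:ℝ) * ((m:ℝ) * n)) ^ (p+1) ≤ a q := by
      intro q hq
      rw [Finset.mem_product, Finset.mem_Icc, Finset.mem_Icc] at hq
      have hq1 : m ≤ q.1 + 1 ∧ q.1 + 1 ≤ 2 * m := by omega
      have hq2 : n ≤ q.2 + 1 ∧ q.2 + 1 ≤ 2 * n := by omega
      have hIle : I (Finset.Icc 1 m ×ˢ Finset.Icc 1 n)
          ≤ I (Finset.Icc 1 (q.1+1) ×ˢ Finset.Icc 1 (q.2+1)) :=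
        hmono _ _ (Finset.product_subset_product
          (Finset.Icc_subset_Icc le_rfl hq1.1) (Finset.Icc_subset_Icc le_rfl hq2.1))
      have hd1 : (0:ℝ) < ((q.1 + 1 : ℕ) : ℝ) * ((q.2 + 1 : ℕ) : ℝ) := by positivity
      have hdle : ((q.1 + 1 : ℕ) : ℝ) * ((q.2 + 1 : ℕ) : ℝ) ≤ 4 * ((m:ℝ) * n) := by
        have h1 : ((q.1 + 1 : ℕ) : ℝ) ≤ 2 * m := by exact_mod_cast hq1.2
        have h2 : ((q.2 + 1 : ℕ) : ℝ) ≤ 2 * n := by exact_mod_cast hq2.2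
        have h3 : (0:ℝ) ≤ ((q.1 + 1 : ℕ) : ℝ) := by positivity
        have h4 : (0:ℝ) ≤ ((q.2 + 1 : ℕ) : ℝ) := by positivity
        nlinarith
      have hdle' : (((q.1 + 1 : ℕ) : ℝ) * ((q.2 + 1 : ℕ) : ℝ)) ^ (p+1)
          ≤ ((4:ℝ) * ((m:ℝ) * n)) ^ (p+1) :=
        Real.rpow_le_rpow hd1.le hdle (by linarith)
      rw [hadef]
      simp only
      exact div_le_div₀ (hInn _) hIle (Real.rpow_pos_of_pos hd1 _) hdle'
    have hsumge := Finset.card_nsmul_le_sum _ _ _ hkey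
    rw [hcard] at hsumge
    have hcast : ((m * n : ℕ) : ℝ) = (m:ℝ) * n := by push_cast; ring
    rw [nsmul_eq_mul, hcast] at hsumge
    have hden : ((4:ℝ) * ((m:ℝ) * n)) ^ (p+1)
        = 4 ^ (p+1) * (((m:ℝ) * n) ^ p * ((m:ℝ) * n)) := by
      rw [Real.mul_rpow (by norm_num) hc0.le, Real.rpow_add hc0 p 1, Real.rpow_one]
    rw [hden] at hsumge
    have h4 : (0:ℝ) < 4 ^ (p+1) := Real.rpow_pos_of_pos (by norm_num) _
    have hmnp : (0:ℝ) < ((m:ℝ) * n) ^ p := Real.rpow_pos_of_pos hc0 _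
    have heq : ((m:ℝ) * n) * (I (Finset.Icc 1 m ×ˢ Finset.Icc 1 n)
        / (4 ^ (p+1) * (((m:ℝ) * n) ^ p * ((m:ℝ) * n))))
        = I (Finset.Icc 1 m ×ˢ Finset.Icc 1 n) / (4 ^ (p+1) * ((m:ℝ) * n) ^ p) := by
      field_simp
    rw [heq] at hsumge
    have hfin := (div_le_iff₀ (by positivity)).1 hsumge
    exact hfin.trans_eq (mul_comm _ _)
  -- main argument
  intro ε hε δ hδ
  have hεp : (0:ℝ) < ε ^ p := Real.rpow_pos_of_pos hε _
  have h4p : (0:ℝ) < (4:ℝ) ^ (p+1) := Real.rpow_pos_of_pos (by norm_num) _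
  have hηpos : 0 < δ * ε ^ p / (2 * 4 ^ (p+1)) := by positivity
  obtain ⟨s₀, hs₀⟩ := summable_iff_vanishing_norm.1 hsum' _ hηpos
  refine ⟨s₀.sup (fun q => max q.1 q.2) + 2, fun m n hm hn hN => ?_⟩
  have hm' : (0:ℝ) < m := by exact_mod_cast hm
  have hn' : (0:ℝ) < n := by exact_mod_cast hn
  have hc0 : (0:ℝ) < (m:ℝ) * n := mul_pos hm' hn'
  have hcpos : (0:ℝ) < ε * ((m:ℝ) * n) := mul_pos hε hc0
  have hmeaseq : μ {ω | ε * ((m:ℝ) * n) <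
        |∑ i ∈ Finset.Icc 1 m, ∑ j ∈ Finset.Icc 1 n, V i j ω|}
      = μ {ω | ε * ((m:ℝ) * n) < |SW (Finset.Icc 1 m ×ˢ Finset.Icc 1 n) ω|} := by
    apply measure_congr
    rw [Filter.eventuallyEq_set]
    filter_upwards [hbox m n] with ω hω
    simp only [Set.mem_setOf_eq, hω]
  rw [hmeaseq]
  have hmarkov := mul_meas_ge_le_integral_of_nonneg
    (Filter.Eventually.of_forall fun ω => Real.rpow_nonneg (abs_nonneg _) p)
    (hIint (Finset.Icc 1 m ×ˢ Finset.Icc 1 n)) ((ε * ((m:ℝ) * n)) ^ p)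
  have hsub : {ω | ε * ((m:ℝ) * n) < |SW (Finset.Icc 1 m ×ˢ Finset.Icc 1 n) ω|}
      ⊆ {ω | (ε * ((m:ℝ) * n)) ^ p ≤ |SW (Finset.Icc 1 m ×ˢ Finset.Icc 1 n) ω| ^ p} :=
    fun ω hω => Real.rpow_le_rpow hcpos.le (le_of_lt hω) hp0.le
  have hPle : (μ {ω | ε * ((m:ℝ) * n) < |SW (Finset.Icc 1 m ×ˢ Finset.Icc 1 n) ω|}).toReal
      ≤ (μ {ω | (ε * ((m:ℝ) * n)) ^ p
          ≤ |SW (Finset.Icc 1 m ×ˢ Finset.Icc 1 n) ω| ^ p}).toReal :=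
    ENNReal.toReal_mono (measure_ne_top μ _) (measure_mono hsub)
  have hcp : (0:ℝ) < (ε * ((m:ℝ) * n)) ^ p := Real.rpow_pos_of_pos hcpos _
  have hdisjB : Disjoint (Finset.Icc (m-1) (2*m-2) ×ˢ Finset.Icc (n-1) (2*n-2)) s₀ := by
    rw [Finset.disjoint_left]
    intro q hq hq'
    rw [Finset.mem_product, Finset.mem_Icc, Finset.mem_Icc] at hq
    have h1 : max q.1 q.2 ≤ s₀.sup (fun q => max q.1 q.2) :=
      Finset.le_sup (f := fun q : ℕ × ℕ => max q.1 q.2) hq'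
    have h3 := max_le_iff.mp h1
    rcases le_max_iff.mp hN with h | h <;> omega
  have hsumB : ∑ q ∈ Finset.Icc (m-1) (2*m-2) ×ˢ Finset.Icc (n-1) (2*n-2), a q
      < δ * ε ^ p / (2 * 4 ^ (p+1)) := by
    have h := hs₀ _ hdisjB
    rwa [Real.norm_eq_abs, abs_of_nonneg (Finset.sum_nonneg fun q _ => hann q)] at h
  have h1 : (ε * ((m:ℝ) * n)) ^ p *
      (μ {ω | ε * ((m:ℝ) * n) < |SW (Finset.Icc 1 m ×ˢ Finset.Icc 1 n) ω|}).toReal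
      ≤ I (Finset.Icc 1 m ×ˢ Finset.Icc 1 n) :=
    le_trans (mul_le_mul_of_nonneg_left hPle hcp.le) hmarkov
  have h2 := hcore m n hm hn
  have h3 : (4:ℝ) ^ (p+1) * ((m:ℝ) * n) ^ p *
      ∑ q ∈ Finset.Icc (m-1) (2*m-2) ×ˢ Finset.Icc (n-1) (2*n-2), a q
      < 4 ^ (p+1) * ((m:ℝ) * n) ^ p * (δ * ε ^ p / (2 * 4 ^ (p+1))) :=
    mul_lt_mul_of_pos_left hsumB (by positivity)
  have hcpeq : (ε * ((m:ℝ) * n)) ^ p = ε ^ p * ((m:ℝ) * n) ^ p :=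
    Real.mul_rpow hε.le hc0.le
  have hmnp : (0:ℝ) < ((m:ℝ) * n) ^ p := Real.rpow_pos_of_pos hc0 _
  have h4 : (4:ℝ) ^ (p+1) * ((m:ℝ) * n) ^ p * (δ * ε ^ p / (2 * 4 ^ (p+1)))
      < (ε * ((m:ℝ) * n)) ^ p * δ := by
    rw [hcpeq]
    have : (4:ℝ) ^ (p+1) * ((m:ℝ) * n) ^ p * (δ * ε ^ p / (2 * 4 ^ (p+1)))
        = ((m:ℝ) * n) ^ p * (δ * ε ^ p) / 2 := by
      field_simp
    rw [this]
    nlinarith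
  have hchain := lt_of_le_of_lt (h1.trans h2) (lt_trans h3 h4)
  exact lt_of_mul_lt_mul_left hchain hcp.le
end
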